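/- arXiv:1810.07283 — 8 statements merged into one kernel-verified Lean document; each statement's English description precedes it below -/
import Mathlib

section
/- Let k ≥ 2, ε > 0, 1 ≤ d ≤ k−1 and n ≥ 1. For the scheme Q = Q_{k,ε,d} and the empirical estimator p̂, the expected ℓ_2^2 estimation loss E_{Y^n ~ (pQ)^n} Σ_{i=1}^k (p̂_i(Y^n) − p_i)^2 over p ∈ Δ_k is maximized at the uniform distribution p_U = (1/k,…,1/k), and its maximum value equals ((k−1)^2/(n k (e^ε−1)^2)) · (d e^ε + k − d)^2/(d(k−d)). -/
open MeasureTheory ProbabilityTheory Filter Real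
open scoped ENNReal NNReal

noncomputable section

/-- The probability simplex Δ_k ⊆ ℝ^k. -/
def simplex (k : ℕ) : Set (Fin k → ℝ) :=
  {p | (∀ i, 0 ≤ p i) ∧ ∑ i, p i = 1}

/-- ε-local differential privacy for a Markov kernel from `Fin k` to `Y`. -/
def IsPrivate {Y : Type} [MeasurableSpace Y] {k : ℕ} (ε : ℝ) (Q : Kernel (Fin k) Y) : Prop :=
  IsMarkovKernel Q ∧
    ∀ S : Set Y, MeasurableSet S → ∀ x x' : Fin k,
      Q x S ≤ ENNReal.ofReal (Real.exp ε) * Q x' S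

/-- The marginal distribution m = pQ of a privatized sample. -/
def marginal {Y : Type} [MeasurableSpace Y] {k : ℕ} (Q : Kernel (Fin k) Y)
    (p : Fin k → ℝ) : Measure Y :=
  ∑ i, ENNReal.ofReal (p i) • Q i

/-- Worst-case ℓ_u^u risk of the mechanism `Q` with estimator `est` from `n` samples. -/
def risk {Y : Type} [MeasurableSpace Y] (k n : ℕ) (u : ℝ) (Q : Kernel (Fin k) Y)
    (est : (Fin n → Y) → Fin k → ℝ) : ℝ≥0∞ :=
  ⨆ p ∈ simplex k,
    ∫⁻ y, ENNReal.ofReal (∑ i, |est y i - p i| ^ u)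
      ∂(Measure.pi fun _ : Fin n => marginal Q p)

/-- Minimax ℓ_u^u risk of the mechanism `Q` from `n` samples. -/
def minimaxRisk {Y : Type} [MeasurableSpace Y] (k n : ℕ) (u : ℝ) (Q : Kernel (Fin k) Y) : ℝ≥0∞ :=
  ⨅ (est : (Fin n → Y) → Fin k → ℝ) (_ : Measurable est), risk k n u Q est

/-- Output alphabet Y_{k,d} : subsets of {1,…,k} of size d. -/
def Out (k d : ℕ) : Type := {S : Finset (Fin k) // S.card = d}

instance (k d : ℕ) : Fintype (Out k d) := Subtype.fintype _
instance (k d : ℕ) : MeasurableSpace (Out k d) := ⊤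
instance (k d : ℕ) : MeasurableSingletonClass (Out k d) := ⟨fun _ => trivial⟩
instance (k d : ℕ) : DecidableEq (Out k d) := Subtype.instDecidableEq

/-- Q_{k,ε,d}(y|i). -/
def schemeP (k : ℕ) (ε : ℝ) (d : ℕ) (i : Fin k) (y : Out k d) : ℝ :=
  (if i ∈ y.1 then Real.exp ε else 1) /
    ((k-1).choose (d-1) * Real.exp ε + (k-1).choose d)

/-- The scheme Q_{k,ε,d} as a Markov kernel. -/
def schemeKernel (k : ℕ) (ε : ℝ) (d : ℕ) : Kernel (Fin k) (Out k d) :=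
  Kernel.ofFunOfCountable fun i =>
    ∑ y : Out k d, ENNReal.ofReal (schemeP k ε d i y) • Measure.dirac y

/-- Constant A of the empirical estimator. -/
def Aconst (k d : ℕ) (ε : ℝ) : ℝ :=
  (((k:ℝ)-1) * Real.exp ε + ((k:ℝ)-1)*((k:ℝ)-d)/d) / (((k:ℝ)-d)*(Real.exp ε - 1))

/-- Constant B of the empirical estimator. -/
def Bconst (k d : ℕ) (ε : ℝ) : ℝ :=
  (((d:ℝ)-1) * Real.exp ε + ((k:ℝ)-d)) / (((k:ℝ)-d)*(Real.exp ε - 1))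

/-- t_i(y^n): the number of privatized samples whose i-th coordinate is 1. -/
def tcount {k d n : ℕ} (i : Fin k) (y : Fin n → Out k d) : ℕ :=
  (Finset.univ.filter fun j => i ∈ (y j).1).card

/-- The empirical estimator p̂ under Q_{k,ε,d}. -/
def empEst (k d n : ℕ) (ε : ℝ) (y : Fin n → Out k d) (i : Fin k) : ℝ :=
  Aconst k d ε * ((tcount i y : ℝ) / n) - Bconst k d ε

/-- Marginal probability (pQ_{k,ε,d})(y). -/
def margP (k : ℕ) (ε : ℝ) (d : ℕ) (p : Fin k → ℝ) (y : Out k d) : ℝ :=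
  ∑ i, p i * schemeP k ε d i y

/-- Membership in D_{ε,E}: a finite-output ε-LDP scheme, given by the matrix
`q j v = Q(j|v)`, whose conditional probability ratios take only values 1 and e^ε. -/
def memDEE (k L : ℕ) (ε : ℝ) (q : Fin L → Fin k → ℝ) : Prop :=
  (∀ j v, 0 ≤ q j v) ∧ (∀ v, ∑ j, q j v = 1) ∧
  (∀ j v v', q j v ≤ Real.exp ε * q j v') ∧
  (∀ j v, q j v / (⨅ v', q j v') ∈ ({1, Real.exp ε} : Set ℝ))

/-- q_j = (1/k) Σ_v q_{jv}. -/
def qrow {k L : ℕ} (q : Fin L → Fin k → ℝ) (j : Fin L) : ℝ :=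
  (1/(k:ℝ)) * ∑ v, q j v

/-- A finite-output scheme (matrix) as a Markov kernel. -/
def matKernel (k L : ℕ) (q : Fin L → Fin k → ℝ) : Kernel (Fin k) (Fin L) :=
  Kernel.ofFunOfCountable fun v =>
    ∑ j, ENNReal.ofReal (q j v) • Measure.dirac j

/-- C_u = E|X|^u for X standard normal. -/
def Cmom (u : ℝ) : ℝ := ∫ x, |x| ^ u ∂(gaussianReal 0 1)

/-- g(s) = (s e^ε + k − s)² / (s(k−s)). -/
def gfun (ε k s : ℝ) : ℝ := (s * Real.exp ε + k - s)^2 / (s * (k - s))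

/-- d* is a minimizer of (d e^ε + k − d)²/(d(k−d)) over d ∈ {1,…,k−1}. -/
def IsOptDstar (k : ℕ) (ε : ℝ) (dstar : ℕ) : Prop :=
  dstar ∈ Finset.Icc 1 (k-1) ∧
    ∀ d ∈ Finset.Icc 1 (k-1), gfun ε k dstar ≤ gfun ε k d

/-- M(k,ε). -/
def Mconst (k : ℕ) (ε : ℝ) (dstar : ℕ) : ℝ :=
  (((k:ℝ)-1)^2 / ((k:ℝ)^2 * (Real.exp ε - 1)^2)) * gfun ε k dstar

/-- The prior set P_n = {p ∈ Δ_k : ‖p − p_U‖₂ ≤ D/√n}. -/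
def Pball (k : ℕ) (D : ℝ) (n : ℕ) : Set (Fin k → ℝ) :=
  {p | p ∈ simplex k ∧ Real.sqrt (∑ i, (p i - 1/(k:ℝ))^2) ≤ D / Real.sqrt n}

/-- The uniform distribution on P_n: normalized (k−1)-dimensional Hausdorff measure. -/
def unifP (k : ℕ) (D : ℝ) (n : ℕ) : Measure (Fin k → ℝ) :=
  ((μH[((k:ℝ)-1)]) (Pball k D n))⁻¹ • (μH[((k:ℝ)-1)]).restrict (Pball k D n)

/-- Component-wise optimal Bayes ℓ_u^u risk for the finite-output scheme `q`,
with the uniform prior on P_n. -/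
def bayesRisk (k L : ℕ) (u : ℝ) (q : Fin L → Fin k → ℝ) (D : ℝ) (n : ℕ) (i : Fin k) : ℝ≥0∞ :=
  ⨅ est : (Fin n → Fin L) → ℝ,
    ∫⁻ p, (∑ y : Fin n → Fin L,
        (∏ j, ENNReal.ofReal (∑ v, p v * q (y j) v)) *
          ENNReal.ofReal (|est y - p i| ^ u))
      ∂(unifP k D n)

end
/-- Expected ℓ₂² loss of the scheme Q_{k,ε,d} with the empirical estimator, under
source distribution p, from n i.i.d. privatized samples. -/
noncomputable def loss2 (k : ℕ) (ε : ℝ) (d n : ℕ) (p : Fin k → ℝ) : ℝ :=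
  ∑ y : Fin n → Out k d, (∏ j, margP k ε d p (y j)) * ∑ i, (empEst k d n ε y i - p i)^2


namespace Stat4
open Finset
variable {α : Type*} [DecidableEq α]

lemma card_filter_mem (s : Finset α) (d : ℕ) (hd : 1 ≤ d) (i : α) (hi : i ∈ s) :
    #{S ∈ s.powersetCard d | i ∈ S} = (#s - 1).choose (d-1) := by
  rw [← Finset.card_erase_of_mem hi, ← card_powersetCard]
  apply Finset.card_bij' (fun S _ => S.erase i) (fun T _ => insert i T)
  · intro S hS
    simp only [mem_filter] at hS
    exact insert_erase hS.2
  · intro T hT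
    rw [mem_powersetCard] at hT
    have hiT : i ∉ T := fun h => (mem_erase.1 (hT.1 h)).1 rfl
    exact erase_insert hiT
  · intro S hS
    simp only [mem_filter, mem_powersetCard] at hS
    rw [mem_powersetCard]
    exact ⟨erase_subset_erase i hS.1.1, by rw [card_erase_of_mem hS.2, hS.1.2]⟩
  · intro T hT
    rw [mem_powersetCard] at hT
    have hiT : i ∉ T := fun h => (mem_erase.1 (hT.1 h)).1 rfl
    simp only [mem_filter, mem_powersetCard]
    refine ⟨⟨?_, ?_⟩, mem_insert_self _ _⟩
    · exact insert_subset hi (hT.1.trans (erase_subset _ _))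
    · rw [card_insert_of_notMem hiT, hT.2, Nat.sub_add_cancel hd]

lemma card_filter_not_mem (s : Finset α) (d : ℕ) (i : α) (hi : i ∈ s) :
    #{S ∈ s.powersetCard d | i ∉ S} = (#s - 1).choose d := by
  rw [← Finset.card_erase_of_mem hi, ← card_powersetCard]
  congr 1
  ext S
  simp only [mem_filter, mem_powersetCard, subset_erase]
  tauto

end Stat4
namespace Stat4
variable {ι : Type} [Fintype ι] [DecidableEq ι] {n : ℕ} (w : ι → ℝ)

lemma sum_prod_eq (h : Fin n → ι → ℝ) :
    ∑ y : Fin n → ι, ∏ j, h j (y j) = ∏ j, ∑ z, h j z := (Fintype.prod_sum h).symm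

lemma E_one (hw : ∑ z, w z = 1) : ∑ y : Fin n → ι, ∏ j, w (y j) = 1 := by
  rw [sum_prod_eq]; simp [hw]

lemma E_single (hw : ∑ z, w z = 1) (g : ι → ℝ) (j0 : Fin n) :
    ∑ y : Fin n → ι, (∏ j, w (y j)) * g (y j0) = ∑ z, w z * g z := by
  have h1 : ∀ y : Fin n → ι, (∏ j, w (y j)) * g (y j0)
      = ∏ j, (w (y j) * if j = j0 then g (y j) else 1) := by
    intro y
    rw [Finset.prod_mul_distrib, Finset.prod_ite_eq' Finset.univ j0 (fun j => g (y j))]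
    simp
  simp_rw [h1]
  rw [sum_prod_eq (fun j z => w z * if j = j0 then g z else 1)]
  have h2 : ∀ j : Fin n, (∑ z, w z * if j = j0 then g z else 1)
      = if j = j0 then ∑ z, w z * g z else 1 := by
    intro j; split_ifs with h <;> simp [hw]
  simp_rw [h2]
  rw [Finset.prod_ite_eq' Finset.univ j0 (fun _ => ∑ z, w z * g z)]
  simp

lemma E_pair (hw : ∑ z, w z = 1) (g g' : ι → ℝ) (j0 j1 : Fin n) (hj : j0 ≠ j1) :
    ∑ y : Fin n → ι, (∏ j, w (y j)) * (g (y j0) * g' (y j1))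
      = (∑ z, w z * g z) * (∑ z, w z * g' z) := by
  have h1 : ∀ y : Fin n → ι, (∏ j, w (y j)) * (g (y j0) * g' (y j1))
      = ∏ j, (w (y j) * ((if j = j0 then g (y j) else 1) * (if j = j1 then g' (y j) else 1))) := by
    intro y
    simp_rw [← mul_assoc, Finset.prod_mul_distrib,
        Finset.prod_ite_eq' Finset.univ j0 (fun j => g (y j)),
        Finset.prod_ite_eq' Finset.univ j1 (fun j => g' (y j))]
    simp [mul_assoc]
  simp_rw [h1]
  rw [sum_prod_eq (fun j z => w z * ((if j = j0 then g z else 1) * if j = j1 then g' z else 1))]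
  have h2 : ∀ j : Fin n, (∑ z, w z * ((if j = j0 then g z else 1) * (if j = j1 then g' z else 1)))
      = if j = j0 then (∑ z, w z * g z) else if j = j1 then (∑ z, w z * g' z) else 1 := by
    intro j
    rcases eq_or_ne j j0 with rfl | h0
    · simp [hj]
    · rcases eq_or_ne j j1 with rfl | h1'
      · simp [h0]
      · simp [h0, h1', hw]
  simp_rw [h2]
  rw [← Finset.mul_prod_erase Finset.univ _ (Finset.mem_univ j0),
      ← Finset.mul_prod_erase _ _ (Finset.mem_erase.2 ⟨Ne.symm hj, Finset.mem_univ j1⟩),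
      if_pos rfl, if_neg (Ne.symm hj), if_pos rfl, Finset.prod_eq_one, mul_one]
  intro j hjmem
  simp only [Finset.mem_erase] at hjmem
  rw [if_neg hjmem.2.1, if_neg hjmem.1]


lemma E_count (hw : ∑ z, w z = 1) (g : ι → ℝ) :
    ∑ y : Fin n → ι, (∏ j, w (y j)) * (∑ j, g (y j)) = (n:ℝ) * (∑ z, w z * g z) := by
  simp_rw [Finset.mul_sum]
  rw [Finset.sum_comm]
  simp_rw [fun j0 => E_single w hw g j0]
  simp [Finset.card_univ, Finset.mul_sum, mul_comm]

lemma E_count_sq (hw : ∑ z, w z = 1) (g : ι → ℝ) (hg : ∀ z, g z * g z = g z) :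
    ∑ y : Fin n → ι, (∏ j, w (y j)) * ((∑ j, g (y j)) * (∑ j, g (y j)))
      = (n:ℝ) * (∑ z, w z * g z) + ((n:ℝ)*((n:ℝ)-1)) * (∑ z, w z * g z)^2 := by
  set m := ∑ z, w z * g z with hm
  have key : ∀ j0 j1 : Fin n, (∑ y : Fin n → ι, (∏ j, w (y j)) * (g (y j0) * g (y j1)))
      = if j0 = j1 then m else m^2 := by
    intro j0 j1
    rcases eq_or_ne j0 j1 with rfl | hne
    · simp only [if_pos rfl]
      have hgg : ∀ y : Fin n → ι, g (y j0) * g (y j0) = g (y j0) := fun y => hg _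
      simp_rw [hgg]
      exact E_single w hw g j0
    · rw [if_neg hne, E_pair w hw g g j0 j1 hne, sq]
  have expand : ∀ y : Fin n → ι, (∏ j, w (y j)) * ((∑ j, g (y j)) * (∑ j, g (y j)))
      = ∑ j0, ∑ j1, (∏ j, w (y j)) * (g (y j0) * g (y j1)) := by
    intro y
    rw [Finset.sum_mul_sum, Finset.mul_sum]
    exact Finset.sum_congr rfl fun j0 _ => by rw [Finset.mul_sum]
  simp_rw [expand]
  rw [Finset.sum_comm]
  have swap2 : ∀ j0 : Fin n, (∑ y : Fin n → ι, ∑ j1, (∏ j, w (y j)) * (g (y j0) * g (y j1)))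
      = ∑ j1, ∑ y : Fin n → ι, (∏ j, w (y j)) * (g (y j0) * g (y j1)) := fun j0 => Finset.sum_comm ..
  simp_rw [swap2, key]
  have inner : ∀ j0 : Fin n, (∑ j1, if j0 = j1 then m else m^2) = m + ((n:ℝ)-1) * m^2 := by
    intro j0
    have : ∀ j1 : Fin n, (if j0 = j1 then m else m^2) = m^2 + (if j0 = j1 then m - m^2 else 0) := by
      intro j1; split_ifs <;> ring
    simp_rw [this]
    rw [Finset.sum_add_distrib, Finset.sum_const, Finset.sum_ite_eq]
    simp [Finset.card_univ]
    ring
  simp_rw [inner]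
  simp [Finset.card_univ]
  ring

lemma E_quad (hw : ∑ z, w z = 1) (g : ι → ℝ) (hg : ∀ z, g z * g z = g z) (a c : ℝ) :
    ∑ y : Fin n → ι, (∏ j, w (y j)) * (a * (∑ j, g (y j)) + c)^2
      = a^2 * ((n:ℝ) * (∑ z, w z * g z) + ((n:ℝ)*((n:ℝ)-1)) * (∑ z, w z * g z)^2)
        + 2*a*c*((n:ℝ) * (∑ z, w z * g z)) + c^2 := by
  have expand : ∀ y : Fin n → ι, (∏ j, w (y j)) * (a * (∑ j, g (y j)) + c)^2
      = ((∏ j, w (y j)) * ((∑ j, g (y j)) * (∑ j, g (y j)))) * a^2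
        + ((∏ j, w (y j)) * (∑ j, g (y j))) * (2*a*c) + (∏ j, w (y j)) * c^2 := by
    intro y; ring
  simp_rw [expand]
  rw [Finset.sum_add_distrib, Finset.sum_add_distrib, ← Finset.sum_mul, ← Finset.sum_mul,
      ← Finset.sum_mul, E_count w hw g, E_count_sq w hw g hg, E_one w hw]
  ring


end Stat4
namespace Stat4
open Finset

noncomputable def den (k d : ℕ) (ε : ℝ) : ℝ :=
  ((k-1).choose (d-1) : ℝ) * Real.exp ε + ((k-1).choose d : ℝ)

noncomputable def alphaC (k d : ℕ) (ε : ℝ) : ℝ :=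
  ((k-2).choose (d-1) : ℝ) * (Real.exp ε - 1) / den k d ε

noncomputable def betaC (k d : ℕ) (ε : ℝ) : ℝ :=
  (((k-1).choose (d-1) : ℝ) * Real.exp ε - (Real.exp ε - 1) * ((k-2).choose (d-1) : ℝ))
    / den k d ε

def chi {k d : ℕ} (i : Fin k) (z : Out k d) : ℝ := if i ∈ z.1 then 1 else 0

section scheme
variable (k d : ℕ) (ε : ℝ) (hk : 2 ≤ k) (hd1 : 1 ≤ d) (hdk : d ≤ k - 1) (hε : 0 < ε)

include hk hd1 hdk in
lemma den_pos : 0 < den k d ε := by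
  have h1 : 0 < ((k-1).choose (d-1) : ℝ) := by
    exact_mod_cast Nat.choose_pos (by omega)
  have h2 : 0 ≤ ((k-1).choose d : ℝ) := by positivity
  have := Real.exp_pos ε
  unfold den; nlinarith

lemma out_sum (f : Finset (Fin k) → ℝ) :
    ∑ z : Out k d, f z.1 = ∑ S ∈ Finset.powersetCard d (Finset.univ : Finset (Fin k)), f S :=
  (Finset.sum_subtype _ (fun S => Finset.mem_powersetCard_univ) f).symm

include hd1 in
lemma cardP1 (i : Fin k) :
    #{S ∈ Finset.powersetCard d (Finset.univ : Finset (Fin k)) | i ∈ S} = (k-1).choose (d-1) := by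
  rw [card_filter_mem _ _ hd1 i (mem_univ i)]
  simp

lemma cardP0 (i : Fin k) :
    #{S ∈ Finset.powersetCard d (Finset.univ : Finset (Fin k)) | i ∉ S} = (k-1).choose d := by
  rw [card_filter_not_mem _ _ i (mem_univ i)]
  simp

include hd1 in
lemma cardP3 (i v : Fin k) (hvi : v ≠ i) :
    #{S ∈ Finset.powersetCard d (Finset.univ : Finset (Fin k)) | i ∈ S ∧ v ∉ S}
      = (k-2).choose (d-1) := by
  have heq : {S ∈ Finset.powersetCard d (Finset.univ : Finset (Fin k)) | i ∈ S ∧ v ∉ S}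
      = {S ∈ Finset.powersetCard d (Finset.univ.erase v) | i ∈ S} := by
    ext S
    simp only [mem_filter, mem_powersetCard, subset_univ, true_and, subset_erase]
    tauto
  rw [heq, card_filter_mem _ _ hd1 i (mem_erase.2 ⟨hvi.symm, mem_univ i⟩),
      card_erase_of_mem (mem_univ v), Finset.card_univ, Fintype.card_fin]
  congr 1

include hk hd1 hdk in
lemma sum_schemeP (v : Fin k) : ∑ z : Out k d, schemeP k ε d v z = 1 := by
  have h0 : ∀ z : Out k d, schemeP k ε d v z
      = (if v ∈ z.1 then Real.exp ε else (1:ℝ)) / den k d ε := fun z => rfl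
  simp_rw [h0]
  rw [out_sum k d (fun S => (if v ∈ S then Real.exp ε else (1:ℝ)) / den k d ε),
      ← Finset.sum_div, Finset.sum_ite, Finset.sum_const, Finset.sum_const,
      cardP1 k d hd1 v, cardP0 k d v]
  have hden := den_pos k d ε hk hd1 hdk
  rw [nsmul_eq_mul, nsmul_eq_mul, mul_one]
  exact div_self (ne_of_gt hden)

include hk hd1 hdk in
lemma key_c (v i : Fin k) :
    ∑ z : Out k d, schemeP k ε d v z * chi i z
      = betaC k d ε + (if v = i then alphaC k d ε else 0) := by
  have hden := den_pos k d ε hk hd1 hdk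
  have h0 : ∀ z : Out k d, schemeP k ε d v z * chi i z
      = ((if v ∈ z.1 then Real.exp ε else 1) * (if i ∈ z.1 then (1:ℝ) else 0)) / den k d ε := by
    intro z
    unfold schemeP chi den
    ring
  simp_rw [h0]
  rw [out_sum k d (fun S =>
        ((if v ∈ S then Real.exp ε else 1) * (if i ∈ S then (1:ℝ) else 0)) / den k d ε),
      ← Finset.sum_div]
  have hnum : ∀ S : Finset (Fin k),
      (if v ∈ S then Real.exp ε else 1) * (if i ∈ S then (1:ℝ) else 0)
        = Real.exp ε * (if i ∈ S then (1:ℝ) else 0)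
          - (Real.exp ε - 1) * (if i ∈ S ∧ v ∉ S then (1:ℝ) else 0) := by
    intro S
    by_cases h1 : i ∈ S <;> by_cases h2 : v ∈ S <;> simp [h1, h2] <;> ring
  simp_rw [hnum]
  rw [Finset.sum_sub_distrib, ← Finset.mul_sum, ← Finset.mul_sum,
      Finset.sum_boole, Finset.sum_boole]
  have hcard2 : #{S ∈ Finset.powersetCard d (Finset.univ : Finset (Fin k)) | i ∈ S ∧ v ∉ S}
      = if v = i then 0 else (k-2).choose (d-1) := by
    rcases eq_or_ne v i with rfl | hvi
    · rw [if_pos rfl]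
      rw [Finset.filter_false_of_mem, Finset.card_empty]
      intro S _ h
      exact h.2 h.1
    · rw [if_neg hvi]
      exact cardP3 k d hd1 i v hvi
  rw [cardP1 k d hd1 i, hcard2]
  rcases eq_or_ne v i with rfl | hvi
  · rw [if_pos rfl, if_pos rfl]
    unfold alphaC betaC
    push_cast
    field_simp
    ring
  · rw [if_neg hvi, if_neg hvi]
    unfold betaC
    rw [add_zero]
    push_cast
    ring

include hk hd1 hdk in
lemma marg_one (p : Fin k → ℝ) (hp : ∑ i, p i = 1) :
    ∑ z : Out k d, margP k ε d p z = 1 := by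
  unfold margP
  rw [Finset.sum_comm]
  simp_rw [← Finset.mul_sum, sum_schemeP k d ε hk hd1 hdk, mul_one]
  exact hp

include hk hd1 hdk in
lemma marg_m (p : Fin k → ℝ) (hp : ∑ i, p i = 1) (i : Fin k) :
    ∑ z : Out k d, margP k ε d p z * chi i z = alphaC k d ε * p i + betaC k d ε := by
  unfold margP
  simp_rw [Finset.sum_mul]
  rw [Finset.sum_comm]
  simp_rw [mul_assoc, ← Finset.mul_sum, key_c k d ε hk hd1 hdk _ i, mul_add,
    Finset.sum_add_distrib, ← Finset.sum_mul, hp, one_mul, mul_ite, mul_zero]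
  rw [Finset.sum_ite_eq' Finset.univ i (fun v => p v * alphaC k d ε)]
  simp [add_comm, mul_comm]

include hk hd1 hdk in
lemma nat_id2 : (k-1) * (k-2).choose (d-1) = d * ((k-1).choose d) := by
  have h1 : k - 2 + 1 = k - 1 := by omega
  have h2 : d - 1 + 1 = d := by omega
  have h := Nat.add_one_mul_choose_eq (k-2) (d-1)
  rw [h1, h2] at h
  rw [h]
  ring

include hk hd1 hdk in
lemma nat_id1 : (k-d) * ((k-1).choose (d-1)) = (k-1) * (k-2).choose (d-1) := by
  have h2 : d - 1 + 1 = d := by omega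
  have h3 : k - 1 - (d - 1) = k - d := by omega
  have h := Nat.choose_succ_right_eq (k-1) (d-1)
  rw [h2, h3] at h
  calc (k-d) * ((k-1).choose (d-1)) = (k-1).choose (d-1) * (k-d) := Nat.mul_comm _ _
    _ = (k-1).choose d * d := h.symm
    _ = d * ((k-1).choose d) := Nat.mul_comm _ _
    _ = (k-1) * (k-2).choose (d-1) := (nat_id2 k d hk hd1 hdk).symm

include hk hd1 hdk in
lemma real_id1 : ((k:ℝ)-(d:ℝ)) * ((k-1).choose (d-1) : ℝ)
    = ((k:ℝ)-1) * ((k-2).choose (d-1) : ℝ) := by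
  have h := congrArg (fun t : ℕ => (t:ℝ)) (nat_id1 k d hk hd1 hdk)
  push_cast [Nat.cast_sub (show d ≤ k by omega), Nat.cast_sub (show 1 ≤ k by omega)] at h
  linarith [h]

include hk hd1 hdk in
lemma real_id2 : ((k:ℝ)-1) * ((k-2).choose (d-1) : ℝ) = (d:ℝ) * ((k-1).choose d : ℝ) := by
  have h := congrArg (fun t : ℕ => (t:ℝ)) (nat_id2 k d hk hd1 hdk)
  push_cast [Nat.cast_sub (show 1 ≤ k by omega)] at h
  linarith [h]

include hk hd1 hdk in
lemma den_eq : (d:ℝ)*((k:ℝ)-d) * den k d ε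
    = ((k:ℝ)-1) * ((k-2).choose (d-1) : ℝ) * ((d:ℝ)*Real.exp ε + (k:ℝ)-d) := by
  have r1 := real_id1 k d hk hd1 hdk
  have r2 := real_id2 k d hk hd1 hdk
  unfold den
  linear_combination (d:ℝ)*Real.exp ε * r1 - ((k:ℝ)-d) * r2

section facts
variable (hk : 2 ≤ k) (hd1 : 1 ≤ d) (hdk : d ≤ k - 1) (hε : 0 < ε)

include hε in
lemma hE1 : 1 < Real.exp ε := by
  have := Real.exp_lt_exp.2 hε
  rwa [Real.exp_zero] at this

include hd1 in
lemma hd0 : (0:ℝ) < d := by exact_mod_cast hd1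

include hk hdk in
lemma hkd : (0:ℝ) < (k:ℝ) - d := by
  have h : d + 1 ≤ k := by omega
  have : (d:ℝ) + 1 ≤ k := by exact_mod_cast h
  linarith

end facts

include hk hd1 hdk hε in
lemma hA : Aconst k d ε * alphaC k d ε = 1 := by
  have hden := (den_pos k d ε hk hd1 hdk).ne'
  have hE := (sub_pos.2 (hE1 ε hε)).ne'
  have hd0' := (hd0 d hd1).ne'
  have hkd' := (hkd k d hk hdk).ne'
  have hde := den_eq k d ε hk hd1 hdk
  unfold Aconst alphaC
  field_simp
  linear_combination (-1) * hde

include hk hd1 hdk hε in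
lemma hSum : alphaC k d ε + (k:ℝ) * betaC k d ε = (d:ℝ) := by
  have hden := (den_pos k d ε hk hd1 hdk).ne'
  have r1 := real_id1 k d hk hd1 hdk
  have r2 := real_id2 k d hk hd1 hdk
  unfold alphaC betaC den at *
  field_simp
  rw [div_eq_iff (by rw [mul_comm]; exact hden)]
  linear_combination Real.exp ε * r1 + r2

include hk hd1 hdk hε in
lemma hB : Aconst k d ε * betaC k d ε = Bconst k d ε := by
  have hE := (sub_pos.2 (hE1 ε hε)).ne'
  have hd0' := (hd0 d hd1).ne'
  have hkd' := (hkd k d hk hdk).ne'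
  have hk0 : (k:ℝ) ≠ 0 := Nat.cast_ne_zero.2 (by omega)
  have h1 := hA k d ε hk hd1 hdk hε
  have h2 := hSum k d ε hk hd1 hdk hε
  have step : Aconst k d ε * betaC k d ε = (Aconst k d ε * (d:ℝ) - 1) / k := by
    rw [eq_div_iff hk0]
    linear_combination Aconst k d ε * h2 - h1
  rw [step]
  unfold Aconst Bconst
  field_simp
  ring

lemma chi_sq {k d : ℕ} (i : Fin k) : ∀ z : Out k d, chi i z * chi i z = chi i z := by
  intro z
  unfold chi
  split_ifs <;> norm_num

lemma tcount_cast {k d n : ℕ} (i : Fin k) (y : Fin n → Out k d) :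
    (tcount i y : ℝ) = ∑ j, chi i (y j) := by
  unfold tcount chi
  rw [Finset.card_filter]
  push_cast
  rfl

include hk hd1 hdk hε in
lemma loss2_eq (n : ℕ) (hn : 1 ≤ n) (p : Fin k → ℝ) (hp : ∑ i, p i = 1) :
    loss2 k ε d n p = (Aconst k d ε)^2 / n *
      ((d:ℝ) - ((alphaC k d ε)^2 * (∑ i, (p i)^2)
        + 2 * alphaC k d ε * betaC k d ε + (k:ℝ) * (betaC k d ε)^2)) := by
  have hw := marg_one k d ε hk hd1 hdk p hp
  have hn0 : (n:ℝ) ≠ 0 := Nat.cast_ne_zero.2 (by omega)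
  have hAa := hA k d ε hk hd1 hdk hε
  have hAb := hB k d ε hk hd1 hdk hε
  have hs := hSum k d ε hk hd1 hdk hε
  unfold loss2
  simp_rw [Finset.mul_sum]
  rw [Finset.sum_comm]
  have hyform : ∀ (i : Fin k) (y : Fin n → Out k d),
      empEst k d n ε y i - p i
        = (Aconst k d ε / n) * (∑ j, chi i (y j)) + (-(Bconst k d ε) - p i) := by
    intro i y
    unfold empEst
    rw [tcount_cast]
    ring
  simp_rw [hyform]
  have hEq : ∀ i : Fin k,
      (∑ y : Fin n → Out k d, (∏ j, margP k ε d p (y j)) *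
        ((Aconst k d ε / n) * (∑ j, chi i (y j)) + (-(Bconst k d ε) - p i))^2)
      = (Aconst k d ε)^2/n * ((alphaC k d ε * p i + betaC k d ε)
          - (alphaC k d ε * p i + betaC k d ε)^2) := by
    intro i
    rw [E_quad (margP k ε d p) hw (chi i) (chi_sq i) (Aconst k d ε / n) (-(Bconst k d ε) - p i),
        marg_m k d ε hk hd1 hdk p hp i]
    have hm : -(Bconst k d ε) - p i
        = -(Aconst k d ε * (alphaC k d ε * p i + betaC k d ε)) := by
      linear_combination (p i) * hAa + hAb
    rw [hm]
    field_simp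
    ring
  simp_rw [hEq]
  rw [← Finset.mul_sum]
  congr 1
  have expand : ∀ i : Fin k, (alphaC k d ε * p i + betaC k d ε)
        - (alphaC k d ε * p i + betaC k d ε)^2
      = (alphaC k d ε * p i + betaC k d ε)
        - ((alphaC k d ε)^2 * (p i)^2 + 2*(alphaC k d ε)*(betaC k d ε)* p i
            + (betaC k d ε)^2) := fun i => by ring
  simp_rw [expand]
  have h1 : ∑ i : Fin k, (alphaC k d ε * p i + betaC k d ε)
      = alphaC k d ε + (k:ℝ) * betaC k d ε := by
    rw [Finset.sum_add_distrib, ← Finset.mul_sum, hp, mul_one, Finset.sum_const,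
        Finset.card_univ, Fintype.card_fin, nsmul_eq_mul]
  have h2 : ∑ i : Fin k, ((alphaC k d ε)^2 * (p i)^2
        + 2*(alphaC k d ε)*(betaC k d ε)* p i + (betaC k d ε)^2)
      = (alphaC k d ε)^2 * (∑ i, (p i)^2) + 2*(alphaC k d ε)*(betaC k d ε)
          + (k:ℝ) * (betaC k d ε)^2 := by
    rw [Finset.sum_add_distrib, Finset.sum_add_distrib, ← Finset.mul_sum, ← Finset.mul_sum,
        hp, mul_one, Finset.sum_const, Finset.card_univ, Fintype.card_fin, nsmul_eq_mul]
  rw [Finset.sum_sub_distrib, h1, h2, Finset.mul_sum]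
  linear_combination hs

end scheme
end Stat4

theorem statement4 (k : ℕ) (hk : 2 ≤ k) (ε : ℝ) (hε : 0 < ε) (d n : ℕ)
    (hd1 : 1 ≤ d) (hdk : d ≤ k - 1) (hn : 1 ≤ n) :
    (∀ p ∈ simplex k, loss2 k ε d n p ≤ loss2 k ε d n (fun _ => 1/(k:ℝ))) ∧
      loss2 k ε d n (fun _ => 1/(k:ℝ)) =
        (((k:ℝ)-1)^2 / ((n:ℝ) * k * (Real.exp ε - 1)^2)) *
          (((d:ℝ) * Real.exp ε + (k:ℝ) - d)^2 / ((d:ℝ) * ((k:ℝ) - d))) := by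
  have hk0 : (k:ℝ) ≠ 0 := Nat.cast_ne_zero.2 (by omega)
  have hkpos : (0:ℝ) < k := by positivity
  have hu : ∑ _i : Fin k, (1/(k:ℝ)) = 1 := by
    rw [Finset.sum_const, Finset.card_univ, Fintype.card_fin, nsmul_eq_mul]
    field_simp
  have hku : ∑ _i : Fin k, (1/(k:ℝ))^2 = 1/(k:ℝ) := by
    rw [Finset.sum_const, Finset.card_univ, Fintype.card_fin, nsmul_eq_mul]
    field_simp
  have hlu := Stat4.loss2_eq k d ε hk hd1 hdk hε n hn (fun _ => 1/(k:ℝ)) hu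
  rw [hku] at hlu
  constructor
  · intro p hp
    obtain ⟨_hpos, hsum1⟩ := hp
    rw [Stat4.loss2_eq k d ε hk hd1 hdk hε n hn p hsum1, hlu]
    have hsq : 1/(k:ℝ) ≤ ∑ i, (p i)^2 := by
      have h := sq_sum_le_card_mul_sum_sq (s := (Finset.univ : Finset (Fin k))) (f := p)
      rw [hsum1, Finset.card_univ, Fintype.card_fin, one_pow] at h
      rw [div_le_iff₀ hkpos]
      linarith [h]
    have hA2 : 0 ≤ (Aconst k d ε)^2 / n := by positivity
    apply mul_le_mul_of_nonneg_left _ hA2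
    have := mul_le_mul_of_nonneg_left hsq (sq_nonneg (Stat4.alphaC k d ε))
    linarith
  · rw [hlu]
    have hs := Stat4.hSum k d ε hk hd1 hdk hε
    have key : (d:ℝ) - ((Stat4.alphaC k d ε)^2 * (1/(k:ℝ))
          + 2 * Stat4.alphaC k d ε * Stat4.betaC k d ε + (k:ℝ) * (Stat4.betaC k d ε)^2)
        = (d:ℝ) * ((k:ℝ)-(d:ℝ)) / k := by
      field_simp
      linear_combination -(Stat4.alphaC k d ε + (k:ℝ) * Stat4.betaC k d ε + (d:ℝ)) * hs
    rw [key]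
    have hE := (sub_pos.2 (Stat4.hE1 ε hε)).ne'
    have hd0' := (Stat4.hd0 d hd1).ne'
    have hkd' := (Stat4.hkd k d hk hdk).ne'
    have hn0 : (n:ℝ) ≠ 0 := Nat.cast_ne_zero.2 (by omega)
    unfold _root_.Aconst
    field_simp
    ring
end

section
/- Let k ≥ 2, ε > 0, u ≥ 1 and n ≥ 1. For every ε-locally differentially private mechanism Q ∈ D_ε, the minimax risk satisfies r_{k,n}^{ℓ_u^u}(Q) ≥ inf_{Q' ∈ D_{ε,E}} r_{k,n}^{ℓ_u^u}(Q'). -/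
open MeasureTheory ProbabilityTheory Filter Real
open scoped ENNReal NNReal

noncomputable section AuxProofs
open MeasureTheory ProbabilityTheory
open scoped ENNReal

namespace LDPaux

/-- clamp to [0,1] -/
def cl (t : ℝ) : ℝ := max 0 (min 1 t)

lemma cl_mem (t : ℝ) : cl t ∈ Set.Icc (0:ℝ) 1 :=
  ⟨le_max_left _ _, max_le zero_le_one (min_le_left _ _)⟩

lemma cl_abs_le {p : ℝ} (hp : p ∈ Set.Icc (0:ℝ) 1) (t : ℝ) : |cl t - p| ≤ |t - p| := by
  obtain ⟨hp0, hp1⟩ := hp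
  unfold cl
  rcases le_or_gt t 0 with h | h
  · rw [min_eq_right (le_trans h zero_le_one), max_eq_left h]
    rw [abs_of_nonpos (by linarith), abs_of_nonpos (by linarith)]; linarith
  rcases le_or_gt 1 t with h1 | h1
  · rw [min_eq_left h1, max_eq_right zero_le_one]
    rw [abs_of_nonneg (by linarith), abs_of_nonneg (by linarith)]; linarith
  · rw [min_eq_right h1.le, max_eq_right h.le]

lemma measurable_cl : Measurable cl :=
  (continuous_const.max (continuous_const.min continuous_id)).measurable

lemma convexOn_abs_sub (c : ℝ) : ConvexOn ℝ Set.univ (fun t => |t - c|) := by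
  refine ⟨convex_univ, fun x _ y _ a b ha hb hab => ?_⟩
  simp only [smul_eq_mul]
  have h : a * x + b * y - c = a * (x - c) + b * (y - c) := by linear_combination c * hab
  rw [h]
  calc |a * (x - c) + b * (y - c)| ≤ |a * (x - c)| + |b * (y - c)| := abs_add_le _ _
    _ = a * |x - c| + b * |y - c| := by
        simp only [abs_mul, abs_of_nonneg ha, abs_of_nonneg hb]

lemma image_abs_sub (c : ℝ) : (fun t => |t - c|) '' Set.univ = Set.Ici 0 := by
  ext y
  simp only [Set.image_univ, Set.mem_range, Set.mem_Ici]
  constructor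
  · rintro ⟨t, rfl⟩; exact abs_nonneg _
  · intro hy; exact ⟨c + y, by rw [add_sub_cancel_left, abs_of_nonneg hy]⟩

lemma convexOn_loss (c u : ℝ) (hu : 1 ≤ u) : ConvexOn ℝ Set.univ (fun t => |t - c| ^ u) := by
  have h1 : ConvexOn ℝ ((fun t => |t - c|) '' Set.univ) (fun x : ℝ => x ^ u) := by
    rw [image_abs_sub]; exact convexOn_rpow hu
  have h2 : MonotoneOn (fun x : ℝ => x ^ u) ((fun t => |t - c|) '' Set.univ) := by
    rw [image_abs_sub]
    exact fun x hx y _ hxy => Real.rpow_le_rpow hx hxy (by linarith)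
  exact h1.comp (convexOn_abs_sub c) h2

lemma continuous_loss (c u : ℝ) (hu : 1 ≤ u) : Continuous (fun t => |t - c| ^ u) :=
  ((continuous_id.sub continuous_const).abs).rpow_const (fun _ => Or.inr (by linarith))

lemma jensen_loss {α : Type*} [MeasurableSpace α] (μ : Measure α) [IsProbabilityMeasure μ]
    (f : α → ℝ) (hf : Measurable f) (hb : ∀ a, f a ∈ Set.Icc (0:ℝ) 1)
    {c : ℝ} (hc : c ∈ Set.Icc (0:ℝ) 1) {u : ℝ} (hu : 1 ≤ u) :
    ENNReal.ofReal (|(∫ a, f a ∂μ) - c| ^ u) ≤ ∫⁻ a, ENNReal.ofReal (|f a - c| ^ u) ∂μ := by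
  have hfb : ∀ a, |f a - c| ≤ 1 := by
    intro a
    obtain ⟨h0, h1⟩ := hb a; obtain ⟨hc0, hc1⟩ := hc
    rw [abs_le]; constructor <;> linarith
  have hfint : Integrable f μ := by
    refine (integrable_const (1:ℝ)).mono hf.aestronglyMeasurable ?_
    filter_upwards with a
    rw [Real.norm_eq_abs, norm_one, abs_le]
    exact ⟨by linarith [(hb a).1], (hb a).2⟩
  have hlosint : Integrable (fun a => |f a - c| ^ u) μ := by
    refine (integrable_const (1:ℝ)).mono ?_ ?_
    · exact (((hf.sub measurable_const).abs).pow_const u).aestronglyMeasurable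
    · filter_upwards with a
      rw [Real.norm_eq_abs, norm_one, abs_of_nonneg (Real.rpow_nonneg (abs_nonneg _) u)]
      exact Real.rpow_le_one (abs_nonneg _) (hfb a) (by linarith)
  have hjen := (convexOn_loss c u hu).map_average_le (continuous_loss c u hu).continuousOn
    isClosed_univ (by filter_upwards with a using Set.mem_univ _) hfint hlosint
  rw [average_eq_integral, average_eq_integral] at hjen
  calc ENNReal.ofReal (|(∫ a, f a ∂μ) - c| ^ u)
      ≤ ENNReal.ofReal (∫ a, |f a - c| ^ u ∂μ) := ENNReal.ofReal_le_ofReal hjen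
    _ = ∫⁻ a, ENNReal.ofReal (|f a - c| ^ u) ∂μ :=
        ofReal_integral_eq_lintegral_ofReal hlosint
          (by filter_upwards with a using Real.rpow_nonneg (abs_nonneg _) u)

end LDPaux


namespace LDPaux

lemma pi_dirac {n : ℕ} {γ : Type*} [MeasurableSpace γ] [MeasurableSingletonClass γ]
    (s : Fin n → γ) :
    Measure.pi (fun j => Measure.dirac (s j)) = Measure.dirac s := by
  refine Measure.pi_eq fun A hA => ?_
  rw [Measure.dirac_apply' _ (MeasurableSet.univ_pi hA)]
  by_cases h : ∀ j, s j ∈ A j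
  · rw [Set.indicator_of_mem (Set.mem_univ_pi.2 h)]
    refine (Finset.prod_eq_one fun j _ => ?_).symm
    rw [Measure.dirac_apply' _ (hA j), Set.indicator_of_mem (h j)]
    rfl
  · push_neg at h
    obtain ⟨j0, hj0⟩ := h
    rw [Set.indicator_of_notMem (by rw [Set.mem_univ_pi]; push_neg; exact ⟨j0, hj0⟩)]
    refine ((Finset.prod_eq_zero (Finset.mem_univ j0) ?_)).symm
    rw [Measure.dirac_apply' _ (hA j0), Set.indicator_of_notMem hj0]

lemma mixture_apply {Y : Type*} [MeasurableSpace Y] {γ : Type*} [Fintype γ]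
    (w : γ → ℝ≥0∞) (ν : γ → Measure Y) (A : Set Y) :
    (∑ c, w c • ν c) A = ∑ c, w c * ν c A := by
  rw [Measure.finset_sum_apply]
  exact Finset.sum_congr rfl fun c _ => by rw [Measure.smul_apply, smul_eq_mul]

lemma mixture_prob {Y : Type*} [MeasurableSpace Y] {γ : Type*} [Fintype γ]
    (w : γ → ℝ≥0∞) (ν : γ → Measure Y) [∀ c, IsProbabilityMeasure (ν c)]
    (hw : ∑ c, w c = 1) : IsProbabilityMeasure (∑ c, w c • ν c) := by
  constructor
  rw [mixture_apply]
  simp only [measure_univ, mul_one]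
  exact hw

lemma pi_mixture {Y : Type*} [MeasurableSpace Y] {γ : Type*} [Fintype γ] (n : ℕ)
    (w : γ → ℝ≥0∞) (ν : γ → Measure Y) [∀ c, IsProbabilityMeasure (ν c)]
    (hw : ∑ c, w c = 1) :
    Measure.pi (fun _ : Fin n => ∑ c, w c • ν c)
      = ∑ s : Fin n → γ, (∏ j, w (s j)) • Measure.pi (fun j => ν (s j)) := by
  haveI : IsProbabilityMeasure (∑ c, w c • ν c) := mixture_prob w ν hw
  refine Measure.pi_eq fun A hA => ?_
  rw [Measure.finset_sum_apply]
  have : ∀ s : Fin n → γ, ((∏ j, w (s j)) • Measure.pi (fun j => ν (s j))) (Set.univ.pi A)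
      = ∏ j, (w (s j) * ν (s j) (A j)) := by
    intro s
    rw [Measure.smul_apply, smul_eq_mul, Measure.pi_pi, Finset.prod_mul_distrib]
  rw [Finset.sum_congr rfl fun s _ => this s]
  rw [show (Finset.univ : Finset (Fin n → γ)) = Fintype.piFinset fun _ => Finset.univ from
      (Fintype.piFinset_univ).symm]
  rw [← Finset.prod_univ_sum (fun _ => Finset.univ) (fun j c => w c * ν c (A j))]
  exact Finset.prod_congr rfl fun j _ => (mixture_apply w ν (A j)).symm

lemma withDensity_finset_sum {Y : Type*} [MeasurableSpace Y] (μ : Measure Y)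
    {ι : Type*} (s : Finset ι) (f : ι → Y → ℝ≥0∞) (hf : ∀ i, Measurable (f i)) :
    μ.withDensity (fun y => ∑ i ∈ s, f i y) = ∑ i ∈ s, μ.withDensity (f i) := by
  classical
  induction s using Finset.induction with
  | empty => simp
  | insert a s' hnotmem ih =>
    rw [Finset.sum_insert hnotmem]
    rw [← ih]
    rw [← withDensity_add_left (hf a)]
    congr 1
    ext y
    rw [Pi.add_apply, Finset.sum_insert hnotmem]

end LDPaux


namespace LDPaux

variable {Y : Type} [MeasurableSpace Y] {k : ℕ}

def refM (Q : Kernel (Fin k) Y) : Measure Y := ∑ x : Fin k, (Q x : Measure Y)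

def dens (Q : Kernel (Fin k) Y) (x : Fin k) : Y → ℝ≥0∞ := (Q x).rnDeriv (refM Q)

def amin (Q : Kernel (Fin k) Y) : Y → ℝ≥0∞ := fun y => ⨅ x, dens Q x y

def tauf (Q : Kernel (Fin k) Y) (ε : ℝ) (x : Fin k) (y : Y) : ℝ :=
  ((dens Q x y / amin Q y).toReal - 1) / (Real.exp ε - 1)

def lam (Q : Kernel (Fin k) Y) (ε : ℝ) (S : Finset (Fin k)) (y : Y) : ℝ≥0∞ :=
  amin Q y * ENNReal.ofReal ((∏ x ∈ S, tauf Q ε x y) * ∏ x ∈ Sᶜ, (1 - tauf Q ε x y))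

def beta (Q : Kernel (Fin k) Y) (ε : ℝ) (S : Finset (Fin k)) : ℝ≥0∞ :=
  ∫⁻ y, lam Q ε S y ∂(refM Q)

def rE (ε : ℝ) (S : Finset (Fin k)) (x : Fin k) : ℝ := if x ∈ S then Real.exp ε else 1

def nuRaw (Q : Kernel (Fin k) Y) (ε : ℝ) (S : Finset (Fin k)) : Measure Y :=
  (refM Q).withDensity (lam Q ε S)

lemma rE_pos {ε : ℝ} (hε : 0 ≤ ε) (S : Finset (Fin k)) (x : Fin k) : 0 < rE ε S x := by
  unfold rE; split <;> positivity

lemma one_le_rE {ε : ℝ} (hε : 0 ≤ ε) (S : Finset (Fin k)) (x : Fin k) : 1 ≤ rE ε S x := by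
  unfold rE; split
  · exact Real.one_le_exp hε
  · exact le_refl 1

lemma rE_le_exp {ε : ℝ} (hε : 0 ≤ ε) (S : Finset (Fin k)) (x : Fin k) :
    rE ε S x ≤ Real.exp ε := by
  unfold rE; split
  · exact le_refl _
  · exact Real.one_le_exp hε

instance refM_finite (Q : Kernel (Fin k) Y) [IsMarkovKernel Q] :
    IsFiniteMeasure (refM Q) := by
  constructor
  rw [refM, Measure.finset_sum_apply]
  simp [measure_univ]

lemma absCont (Q : Kernel (Fin k) Y) (x : Fin k) : (Q x : Measure Y) ≪ refM Q := by
  refine Measure.absolutelyContinuous_of_le (Measure.le_iff.2 fun s hs => ?_)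
  rw [refM, Measure.finset_sum_apply]
  exact Finset.single_le_sum (f := fun i => (Q i : Measure Y) s) (fun i _ => zero_le)
    (Finset.mem_univ x)

lemma measurable_dens (Q : Kernel (Fin k) Y) (x : Fin k) : Measurable (dens Q x) :=
  Measure.measurable_rnDeriv _ _

lemma measurable_amin (Q : Kernel (Fin k) Y) : Measurable (amin Q) :=
  Measurable.iInf fun x => measurable_dens Q x

lemma measurable_tauf (Q : Kernel (Fin k) Y) (ε : ℝ) (x : Fin k) :
    Measurable (tauf Q ε x) :=
  ((((measurable_dens Q x).div (measurable_amin Q)).ennreal_toReal).sub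
    measurable_const).div_const _

lemma measurable_lam (Q : Kernel (Fin k) Y) (ε : ℝ) (S : Finset (Fin k)) :
    Measurable (lam Q ε S) := by
  apply (measurable_amin Q).mul
  apply Measurable.ennreal_ofReal
  exact (Finset.measurable_prod _ fun x _ => measurable_tauf Q ε x).mul
    (Finset.measurable_prod _ fun x _ => measurable_const.sub (measurable_tauf Q ε x))

lemma pointwise_decomp (Q : Kernel (Fin k) Y) {ε : ℝ} (hε : 0 < ε) (hk : 0 < k) (y : Y)
    (h1 : ∀ x x', dens Q x y ≤ ENNReal.ofReal (Real.exp ε) * dens Q x' y)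
    (h2 : ∀ x, dens Q x y ≠ ∞) :
    (∀ S : Finset (Fin k), lam Q ε S y ≤ amin Q y) ∧
      (∀ x, ∑ S : Finset (Fin k), ENNReal.ofReal (rE ε S x) * lam Q ε S y = dens Q x y) := by
  haveI : Nonempty (Fin k) := Fin.pos_iff_nonempty.mp hk
  have ha_le : ∀ x, amin Q y ≤ dens Q x y := fun x => iInf_le _ x
  obtain ⟨x0, -, hx0min⟩ := Finset.exists_min_image Finset.univ (fun x => dens Q x y)
    Finset.univ_nonempty
  have hax0 : amin Q y = dens Q x0 y :=
    le_antisymm (ha_le x0) (le_iInf fun x => hx0min x (Finset.mem_univ x))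
  have ha_fin : amin Q y ≠ ∞ := by rw [hax0]; exact h2 x0
  by_cases ha0 : amin Q y = 0
  · have hdz : ∀ x, dens Q x y = 0 := by
      intro x
      refine le_antisymm ?_ zero_le
      calc dens Q x y ≤ ENNReal.ofReal (Real.exp ε) * dens Q x0 y := h1 x x0
        _ = 0 := by rw [← hax0, ha0, mul_zero]
    constructor
    · intro S; simp [lam, ha0]
    · intro x
      rw [hdz x]
      exact Finset.sum_eq_zero fun S _ => by simp [lam, ha0]
  · set E := Real.exp ε with hEdef
    have hE1 : 1 < E := Real.one_lt_exp_iff.mpr hε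
    have hE0 : (0:ℝ) < E - 1 := by linarith
    set t := fun x => tauf Q ε x y with htdef
    have hratio_fin : ∀ x, dens Q x y / amin Q y ≠ ∞ := by
      intro x
      exact (ENNReal.div_lt_top (h2 x) ha0).ne
    have ht_lb : ∀ x, 1 ≤ (dens Q x y / amin Q y).toReal := by
      intro x
      have h' : (1:ℝ≥0∞) ≤ dens Q x y / amin Q y := by
        rw [ENNReal.le_div_iff_mul_le (Or.inl ha0) (Or.inl ha_fin), one_mul]
        exact ha_le x
      have := ENNReal.toReal_mono (hratio_fin x) h'
      simpa using this
    have ht_ub : ∀ x, (dens Q x y / amin Q y).toReal ≤ E := by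
      intro x
      have h' : dens Q x y / amin Q y ≤ ENNReal.ofReal E := by
        rw [ENNReal.div_le_iff_le_mul (Or.inl ha0) (Or.inl ha_fin)]
        calc dens Q x y ≤ ENNReal.ofReal E * dens Q x0 y := h1 x x0
          _ = ENNReal.ofReal E * amin Q y := by rw [hax0]
      have := ENNReal.toReal_mono ENNReal.ofReal_ne_top h'
      rwa [ENNReal.toReal_ofReal (by positivity)] at this
    have ht01 : ∀ x, t x ∈ Set.Icc (0:ℝ) 1 := by
      intro x
      have hx := ht_lb x
      have hx' := ht_ub x
      have h1t : t x = ((dens Q x y / amin Q y).toReal - 1) / (E - 1) := rfl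
      constructor
      · rw [h1t]
        apply div_nonneg _ hE0.le
        linarith
      · rw [h1t, div_le_one hE0]
        linarith
    have hprod_mem : ∀ S : Finset (Fin k),
        0 ≤ (∏ x ∈ S, t x) * ∏ x ∈ Sᶜ, (1 - t x) ∧
        (∏ x ∈ S, t x) * (∏ x ∈ Sᶜ, (1 - t x)) ≤ 1 := by
      intro S
      have hp1 : 0 ≤ ∏ x ∈ S, t x := Finset.prod_nonneg fun x _ => (ht01 x).1
      have hp1' : ∏ x ∈ S, t x ≤ 1 := Finset.prod_le_one (fun x _ => (ht01 x).1)
        (fun x _ => (ht01 x).2)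
      have hp2 : 0 ≤ ∏ x ∈ Sᶜ, (1 - t x) := Finset.prod_nonneg fun x _ => by
        linarith [(ht01 x).2]
      have hp2' : ∏ x ∈ Sᶜ, (1 - t x) ≤ 1 := Finset.prod_le_one
        (fun x _ => by linarith [(ht01 x).2]) (fun x _ => by linarith [(ht01 x).1])
      exact ⟨mul_nonneg hp1 hp2, by nlinarith⟩
    refine ⟨fun S => ?_, fun x => ?_⟩
    · calc lam Q ε S y ≤ amin Q y * 1 := by
            rw [lam]
            exact mul_le_mul_right (ENNReal.ofReal_le_one.2 (hprod_mem S).2) _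
        _ = amin Q y := mul_one _
    · -- the identity
      classical
      set c := fun z : Fin k => if z = x then E else 1 with hcdef
      have hc_prod : ∀ S : Finset (Fin k), ∏ z ∈ S, c z = rE ε S x := by
        intro S
        rw [hcdef, Finset.prod_ite_eq' S x (fun _ => E)]
        rfl
      have hkey : ∀ S : Finset (Fin k),
          rE ε S x * ((∏ z ∈ S, t z) * ∏ z ∈ Sᶜ, (1 - t z))
            = (∏ z ∈ S, (t z * c z)) * ∏ z ∈ (Finset.univ \ S), (1 - t z) := by
        intro S
        rw [Finset.prod_mul_distrib, ← Finset.compl_eq_univ_sdiff, ← hc_prod S]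
        ring
      have hsum_real : ∑ S : Finset (Fin k),
          rE ε S x * ((∏ z ∈ S, t z) * ∏ z ∈ Sᶜ, (1 - t z)) = 1 + t x * (E - 1) := by
        rw [Finset.sum_congr rfl fun S _ => hkey S]
        rw [← Finset.powerset_univ]
        rw [← Finset.prod_add (fun z => t z * c z) (fun z => 1 - t z) Finset.univ]
        have : ∀ z : Fin k, t z * c z + (1 - t z)
            = if z = x then 1 + t x * (E - 1) else 1 := by
          intro z
          by_cases hz : z = x
          · subst hz
            simp only [hcdef, if_pos rfl, if_true, eq_self_iff_true]
            ring
          · simp only [hcdef, if_neg hz]; ring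
        rw [Finset.prod_congr rfl fun z _ => this z,
          Finset.prod_ite_eq' Finset.univ x (fun _ => 1 + t x * (E - 1)),
          if_pos (Finset.mem_univ x)]
      have htoReal : 1 + t x * (E - 1) = (dens Q x y / amin Q y).toReal := by
        have h1t : t x = ((dens Q x y / amin Q y).toReal - 1) / (E - 1) := rfl
        rw [h1t]
        field_simp
        ring
      calc ∑ S : Finset (Fin k), ENNReal.ofReal (rE ε S x) * lam Q ε S y
          = ∑ S : Finset (Fin k), amin Q y *
              ENNReal.ofReal (rE ε S x * ((∏ z ∈ S, t z) * ∏ z ∈ Sᶜ, (1 - t z))) := by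
            refine Finset.sum_congr rfl fun S _ => ?_
            rw [lam, ENNReal.ofReal_mul (le_of_lt (rE_pos hε.le S x))]
            ring
        _ = amin Q y * ENNReal.ofReal (∑ S : Finset (Fin k),
              rE ε S x * ((∏ z ∈ S, t z) * ∏ z ∈ Sᶜ, (1 - t z))) := by
            rw [← Finset.mul_sum, ENNReal.ofReal_sum_of_nonneg]
            intro S _
            exact mul_nonneg (le_of_lt (rE_pos hε.le S x)) (hprod_mem S).1
        _ = amin Q y * ENNReal.ofReal ((dens Q x y / amin Q y).toReal) := by
            rw [hsum_real, htoReal]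
        _ = amin Q y * (dens Q x y / amin Q y) := by rw [ENNReal.ofReal_toReal (hratio_fin x)]
        _ = dens Q x y := ENNReal.mul_div_cancel ha0 ha_fin

lemma ae_good (Q : Kernel (Fin k) Y) [IsMarkovKernel Q] {ε : ℝ}
    (hpriv : ∀ S : Set Y, MeasurableSet S → ∀ x x' : Fin k,
      Q x S ≤ ENNReal.ofReal (Real.exp ε) * Q x' S) :
    ∀ᵐ y ∂(refM Q),
      (∀ x x', dens Q x y ≤ ENNReal.ofReal (Real.exp ε) * dens Q x' y) ∧
        (∀ x, dens Q x y ≠ ∞) := by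
  refine Filter.Eventually.and ?_ ?_
  · rw [ae_all_iff]
    intro x
    rw [ae_all_iff]
    intro x'
    refine ae_le_of_forall_setLIntegral_le_of_sigmaFinite (μ := refM Q)
      (f := dens Q x) (g := fun y => ENNReal.ofReal (Real.exp ε) * dens Q x' y)
      (measurable_dens Q x) ?_
    intro s hs _
    calc ∫⁻ y in s, dens Q x y ∂(refM Q) = (Q x : Measure Y) s :=
          Measure.setLIntegral_rnDeriv (absCont Q x) s
      _ ≤ ENNReal.ofReal (Real.exp ε) * (Q x' : Measure Y) s := hpriv s hs x x'
      _ = ∫⁻ y in s, ENNReal.ofReal (Real.exp ε) * dens Q x' y ∂(refM Q) := by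
          rw [lintegral_const_mul _ (measurable_dens Q x')]
          congr 1
          exact (Measure.setLIntegral_rnDeriv (absCont Q x') s).symm
  · rw [ae_all_iff]
    intro x
    exact (Measure.rnDeriv_lt_top (Q x) (refM Q)).mono fun y h => h.ne

lemma sum_lam_ae (Q : Kernel (Fin k) Y) [IsMarkovKernel Q] {ε : ℝ} (hε : 0 < ε) (hk : 0 < k)
    (hpriv : ∀ S : Set Y, MeasurableSet S → ∀ x x' : Fin k,
      Q x S ≤ ENNReal.ofReal (Real.exp ε) * Q x' S) (x : Fin k) :
    (fun y => ∑ S : Finset (Fin k), ENNReal.ofReal (rE ε S x) * lam Q ε S y)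
      =ᵐ[refM Q] dens Q x :=
  (ae_good Q hpriv).mono fun y hy => (pointwise_decomp Q hε hk y hy.1 hy.2).2 x

lemma lam_le_amin_ae (Q : Kernel (Fin k) Y) [IsMarkovKernel Q] {ε : ℝ} (hε : 0 < ε)
    (hk : 0 < k)
    (hpriv : ∀ S : Set Y, MeasurableSet S → ∀ x x' : Fin k,
      Q x S ≤ ENNReal.ofReal (Real.exp ε) * Q x' S) (S : Finset (Fin k)) :
    lam Q ε S ≤ᵐ[refM Q] amin Q :=
  (ae_good Q hpriv).mono fun y hy => (pointwise_decomp Q hε hk y hy.1 hy.2).1 S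

lemma withDensity_finset_sum' (μ : Measure Y)
    {ι : Type*} (s : Finset ι) (f : ι → Y → ℝ≥0∞) (hf : ∀ i, Measurable (f i)) :
    μ.withDensity (fun y => ∑ i ∈ s, f i y) = ∑ i ∈ s, μ.withDensity (f i) := by
  classical
  induction s using Finset.induction with
  | empty => simp
  | insert a s' hnotmem ih =>
    rw [Finset.sum_insert hnotmem, ← ih, ← withDensity_add_left (hf a)]
    congr 1
    ext y
    rw [Pi.add_apply, Finset.sum_insert hnotmem]

lemma Qdecomp (Q : Kernel (Fin k) Y) [IsMarkovKernel Q] {ε : ℝ} (hε : 0 < ε) (hk : 0 < k)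
    (hpriv : ∀ S : Set Y, MeasurableSet S → ∀ x x' : Fin k,
      Q x S ≤ ENNReal.ofReal (Real.exp ε) * Q x' S) (x : Fin k) :
    (Q x : Measure Y)
      = ∑ S : Finset (Fin k), ENNReal.ofReal (rE ε S x) • nuRaw Q ε S := by
  have h0 : (refM Q).withDensity (dens Q x) = (Q x : Measure Y) :=
    Measure.withDensity_rnDeriv_eq (Q x : Measure Y) (refM Q) (absCont Q x)
  rw [← h0]
  have h1 : (refM Q).withDensity (dens Q x)
      = (refM Q).withDensity
        (fun y => ∑ S : Finset (Fin k), ENNReal.ofReal (rE ε S x) * lam Q ε S y) :=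
    (withDensity_congr_ae (sum_lam_ae Q hε hk hpriv x).symm)
  rw [h1, withDensity_finset_sum' (refM Q) Finset.univ _
    (fun S => (measurable_lam Q ε S).const_mul _)]
  refine Finset.sum_congr rfl fun S _ => ?_
  rw [show (fun y => ENNReal.ofReal (rE ε S x) * lam Q ε S y)
      = ENNReal.ofReal (rE ε S x) • lam Q ε S from rfl]
  exact withDensity_smul _ (measurable_lam Q ε S)

lemma sum_beta (Q : Kernel (Fin k) Y) [IsMarkovKernel Q] {ε : ℝ} (hε : 0 < ε) (hk : 0 < k)
    (hpriv : ∀ S : Set Y, MeasurableSet S → ∀ x x' : Fin k,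
      Q x S ≤ ENNReal.ofReal (Real.exp ε) * Q x' S) (x : Fin k) :
    ∑ S : Finset (Fin k), ENNReal.ofReal (rE ε S x) * beta Q ε S = 1 := by
  have h1 : ∀ S : Finset (Fin k), ENNReal.ofReal (rE ε S x) * beta Q ε S
      = ∫⁻ y, ENNReal.ofReal (rE ε S x) * lam Q ε S y ∂(refM Q) := by
    intro S
    rw [beta, lintegral_const_mul _ (measurable_lam Q ε S)]
  rw [Finset.sum_congr rfl fun S _ => h1 S]
  rw [← lintegral_finset_sum _ (fun S _ => (measurable_lam Q ε S).const_mul _)]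
  rw [lintegral_congr_ae (sum_lam_ae Q hε hk hpriv x)]
  calc ∫⁻ a, dens Q x a ∂(refM Q) = (Q x : Measure Y) Set.univ :=
        Measure.lintegral_rnDeriv (absCont Q x)
    _ = 1 := measure_univ

lemma beta_le_one (Q : Kernel (Fin k) Y) [IsMarkovKernel Q] {ε : ℝ} (hε : 0 < ε) (hk : 0 < k)
    (hpriv : ∀ S : Set Y, MeasurableSet S → ∀ x x' : Fin k,
      Q x S ≤ ENNReal.ofReal (Real.exp ε) * Q x' S) (S : Finset (Fin k)) :
    beta Q ε S ≤ 1 := by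
  have x0 : Fin k := ⟨0, hk⟩
  calc beta Q ε S ≤ ∫⁻ y, amin Q y ∂(refM Q) :=
        lintegral_mono_ae (lam_le_amin_ae Q hε hk hpriv S)
    _ ≤ ∫⁻ y, dens Q x0 y ∂(refM Q) := lintegral_mono fun y => iInf_le _ x0
    _ = (Q x0 : Measure Y) Set.univ := Measure.lintegral_rnDeriv (absCont Q x0)
    _ = 1 := measure_univ

lemma beta_ne_top (Q : Kernel (Fin k) Y) [IsMarkovKernel Q] {ε : ℝ} (hε : 0 < ε) (hk : 0 < k)
    (hpriv : ∀ S : Set Y, MeasurableSet S → ∀ x x' : Fin k,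
      Q x S ≤ ENNReal.ofReal (Real.exp ε) * Q x' S) (S : Finset (Fin k)) :
    beta Q ε S ≠ ∞ :=
  (lt_of_le_of_lt (beta_le_one Q hε hk hpriv S) ENNReal.one_lt_top).ne

lemma nuRaw_univ (Q : Kernel (Fin k) Y) (ε : ℝ) (S : Finset (Fin k)) :
    nuRaw Q ε S Set.univ = beta Q ε S := by
  rw [nuRaw, withDensity_apply _ MeasurableSet.univ, setLIntegral_univ, beta]

lemma nuRaw_zero (Q : Kernel (Fin k) Y) (ε : ℝ) (S : Finset (Fin k))
    (hb : beta Q ε S = 0) : nuRaw Q ε S = 0 := by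
  rw [← Measure.measure_univ_eq_zero, nuRaw_univ]
  exact hb

end LDPaux

end AuxProofs
noncomputable section MainProof
open MeasureTheory ProbabilityTheory LDPaux
open scoped ENNReal

lemma rE_of_mem {k : ℕ} {ε : ℝ} {S : Finset (Fin k)} {x : Fin k} (h : x ∈ S) :
    rE ε S x = Real.exp ε := if_pos h

lemma rE_of_not_mem {k : ℕ} {ε : ℝ} {S : Finset (Fin k)} {x : Fin k} (h : x ∉ S) :
    rE ε S x = 1 := if_neg h

theorem extremal_dominates {Y : Type} [MeasurableSpace Y] (k : ℕ) (hk : 2 ≤ k) (ε u : ℝ)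
    (hε : 0 < ε) (hu : 1 ≤ u) (n : ℕ)
    (Q : Kernel (Fin k) Y) (hQ : IsPrivate ε Q) :
    ∃ (L : ℕ) (q : Fin L → Fin k → ℝ), memDEE k L ε q ∧
      minimaxRisk k n u (matKernel k L q) ≤ minimaxRisk k n u Q := by
  classical
  obtain ⟨hmk, hpriv⟩ := hQ
  haveI := hmk
  have hk0 : 0 < k := lt_of_lt_of_le two_pos hk
  haveI : Nonempty (Fin k) := Fin.pos_iff_nonempty.mp hk0
  have hE1 : (1:ℝ) < Real.exp ε := Real.one_lt_exp_iff.mpr hε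
  set J : Finset (Finset (Fin k)) := Finset.univ.filter (fun S => beta Q ε S ≠ 0) with hJ
  set L : ℕ := J.card with hL
  set e : {S // S ∈ J} ≃ Fin L := J.equivFin with he
  set Sof : Fin L → Finset (Fin k) := fun j => (e.symm j : {S // S ∈ J}).1 with hSof
  have hbne : ∀ j, beta Q ε (Sof j) ≠ 0 := by
    intro j
    exact (Finset.mem_filter.mp (e.symm j).2).2
  have hbnt : ∀ S, beta Q ε S ≠ ∞ := beta_ne_top Q hε hk0 hpriv
  have hbnn : ∀ S, (0:ℝ) ≤ (beta Q ε S).toReal := fun S => ENNReal.toReal_nonneg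
  set q : Fin L → Fin k → ℝ := fun j v => (beta Q ε (Sof j)).toReal * rE ε (Sof j) v with hq
  -- ENNReal version of entries
  have hofReal : ∀ j v, ENNReal.ofReal (q j v)
      = ENNReal.ofReal (rE ε (Sof j) v) * beta Q ε (Sof j) := by
    intro j v
    rw [hq]
    rw [ENNReal.ofReal_mul (hbnn _), ENNReal.ofReal_toReal (hbnt _), mul_comm]
  -- subtype sums equal full sums
  have hJsumE : ∀ x : Fin k,
      ∑ c : {S // S ∈ J}, ENNReal.ofReal (rE ε (c : Finset (Fin k)) x) * beta Q ε c = 1 := by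
    intro x
    rw [Finset.sum_coe_sort J (fun S => ENNReal.ofReal (rE ε S x) * beta Q ε S)]
    refine (Finset.sum_subset (Finset.subset_univ J) ?_).trans (sum_beta Q hε hk0 hpriv x)
    intro S _ hS
    rw [hJ, Finset.mem_filter] at hS
    push_neg at hS
    rw [hS (Finset.mem_univ S), mul_zero]
  have hsumFinL : ∀ (f : {S // S ∈ J} → ℝ≥0∞),
      ∑ j : Fin L, f (e.symm j) = ∑ c : {S // S ∈ J}, f c := by
    intro f
    exact Equiv.sum_comp e.symm f
  have hmem : memDEE k L ε q := by
    refine ⟨?_, ?_, ?_, ?_⟩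
    · intro j v
      exact mul_nonneg (hbnn _) (rE_pos hε.le _ _).le
    · -- columns sum to 1
      intro v
      have hEsum : ∑ j : Fin L, ENNReal.ofReal (q j v) = 1 := by
        rw [Finset.sum_congr rfl fun j _ => hofReal j v]
        rw [hsumFinL (fun c => ENNReal.ofReal (rE ε (c : Finset (Fin k)) v) * beta Q ε c)]
        exact hJsumE v
      have h1 : ∑ j : Fin L, q j v = (∑ j : Fin L, ENNReal.ofReal (q j v)).toReal := by
        rw [ENNReal.toReal_sum (fun j _ => ENNReal.ofReal_ne_top)]
        exact (Finset.sum_congr rfl fun j _ =>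
          (ENNReal.toReal_ofReal (mul_nonneg (hbnn _) (rE_pos hε.le _ _).le)).symm)
      rw [h1, hEsum, ENNReal.toReal_one]
    · -- LDP inequality
      intro j v v'
      rw [hq]
      have h1 : rE ε (Sof j) v ≤ Real.exp ε * rE ε (Sof j) v' := by
        calc rE ε (Sof j) v ≤ Real.exp ε := rE_le_exp hε.le _ _
          _ = Real.exp ε * 1 := (mul_one _).symm
          _ ≤ Real.exp ε * rE ε (Sof j) v' :=
              mul_le_mul_of_nonneg_left (one_le_rE hε.le _ _) (Real.exp_pos ε).le
      calc (beta Q ε (Sof j)).toReal * rE ε (Sof j) v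
          ≤ (beta Q ε (Sof j)).toReal * (Real.exp ε * rE ε (Sof j) v') :=
            mul_le_mul_of_nonneg_left h1 (hbnn _)
        _ = Real.exp ε * ((beta Q ε (Sof j)).toReal * rE ε (Sof j) v') := by ring
    · -- ratio condition
      intro j v
      have hbpos : 0 < (beta Q ε (Sof j)).toReal :=
        ENNReal.toReal_pos (hbne j) (hbnt _)
      by_cases hSu : Sof j = Finset.univ
      · have hconst : ∀ v' : Fin k, q j v' = (beta Q ε (Sof j)).toReal * Real.exp ε := by
          intro v'
          simp only [hq]
          rw [rE_of_mem (by rw [hSu]; exact Finset.mem_univ v')]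
        have hinf : ⨅ v' : Fin k, q j v' = (beta Q ε (Sof j)).toReal * Real.exp ε := by
          rw [show (fun v' : Fin k => q j v') = fun _ => (beta Q ε (Sof j)).toReal * Real.exp ε
            from funext hconst]
          exact ciInf_const
        rw [hinf, hconst v, div_self (by positivity)]
        exact Set.mem_insert _ _
      · obtain ⟨v0, hv0⟩ : ∃ v0, v0 ∉ Sof j := by
          by_contra h
          push_neg at h
          exact hSu (Finset.eq_univ_iff_forall.mpr h)
        have hinf : ⨅ v' : Fin k, q j v' = (beta Q ε (Sof j)).toReal := by
          refine le_antisymm ?_ ?_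
          · calc ⨅ v' : Fin k, q j v' ≤ q j v0 := ciInf_le (Finite.bddBelow_range _) v0
              _ = (beta Q ε (Sof j)).toReal := by
                  simp only [hq]
                  rw [rE_of_not_mem hv0, mul_one]
          · refine le_ciInf fun v' => ?_
            rw [hq]
            exact le_mul_of_one_le_right hbpos.le (one_le_rE hε.le _ _)
        have hval : q j v / (⨅ v' : Fin k, q j v') = rE ε (Sof j) v := by
          rw [hinf]
          simp only [hq]
          rw [mul_comm, mul_div_assoc, div_self hbpos.ne', mul_one]
        rw [hval]
        by_cases hv : v ∈ Sof j
        · rw [rE_of_mem hv]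
          exact Set.mem_insert_iff.mpr (Or.inr rfl)
        · rw [rE_of_not_mem hv]
          exact Set.mem_insert _ _
  -- the mixture components
  set nu : {S // S ∈ J} → Measure Y :=
    fun c => (beta Q ε (c : Finset (Fin k)))⁻¹ • nuRaw Q ε (c : Finset (Fin k)) with hnu
  have hcne : ∀ c : {S // S ∈ J}, beta Q ε (c : Finset (Fin k)) ≠ 0 :=
    fun c => (Finset.mem_filter.mp c.2).2
  haveI hnuprob : ∀ c : {S // S ∈ J}, IsProbabilityMeasure (nu c) := by
    intro c
    constructor
    simp only [hnu, Measure.smul_apply, smul_eq_mul, nuRaw_univ]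
    exact ENNReal.inv_mul_cancel (hcne c) (hbnt _)
  have hnuRaw_eq : ∀ c : {S // S ∈ J},
      nuRaw Q ε (c : Finset (Fin k)) = beta Q ε (c : Finset (Fin k)) • nu c := by
    intro c
    simp only [hnu]
    rw [smul_smul, ENNReal.mul_inv_cancel (hcne c) (hbnt _), one_smul]
  have hQx : ∀ x, (Q x : Measure Y)
      = ∑ c : {S // S ∈ J},
          (ENNReal.ofReal (rE ε (c : Finset (Fin k)) x) * beta Q ε (c : Finset (Fin k))) • nu c := by
    intro x
    rw [Qdecomp Q hε hk0 hpriv x]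
    have h1 : ∑ S : Finset (Fin k), ENNReal.ofReal (rE ε S x) • nuRaw Q ε S
        = ∑ S ∈ J, ENNReal.ofReal (rE ε S x) • nuRaw Q ε S := by
      refine (Finset.sum_subset (Finset.subset_univ J) ?_).symm
      intro S _ hS
      have hb0 : beta Q ε S = 0 := by
        by_contra hb
        exact hS (Finset.mem_filter.mpr ⟨Finset.mem_univ S, hb⟩)
      rw [nuRaw_zero Q ε S hb0, smul_zero]
    rw [h1, ← Finset.sum_coe_sort J (fun S => ENNReal.ofReal (rE ε S x) • nuRaw Q ε S)]
    refine Finset.sum_congr rfl fun c _ => ?_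
    rw [hnuRaw_eq c, smul_smul]
  refine ⟨L, q, hmem, ?_⟩
  rw [_root_.minimaxRisk]
  refine le_iInf fun est => le_iInf fun hest => ?_
  set estC : (Fin n → Y) → Fin k → ℝ := fun y i => cl (est y i) with hestCdef
  have hestCm : Measurable estC :=
    measurable_pi_lambda _ fun i => measurable_cl.comp ((measurable_pi_apply i).comp hest)
  have hmeasi : ∀ i : Fin k, Measurable fun y : Fin n → Y => estC y i :=
    fun i => (measurable_pi_apply i).comp hestCm
  set Edef : (Fin n → {S // S ∈ J}) → Fin k → ℝ :=
    fun s i => ∫ y, estC y i ∂(Measure.pi fun j => nu (s j)) with hEdefdef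
  set est' : (Fin n → Fin L) → Fin k → ℝ := fun t i => Edef (fun j => e.symm (t j)) i
    with hest'def
  have hkey : risk k n u (matKernel k L q) est' ≤ risk k n u Q estC := by
    rw [risk, risk]
    refine iSup₂_le fun p hp => ?_
    have hp0 : ∀ i, 0 ≤ p i := hp.1
    have hp1 : ∑ i, p i = 1 := hp.2
    have hpi : ∀ i, p i ∈ Set.Icc (0:ℝ) 1 := fun i =>
      ⟨hp0 i, by rw [← hp1]; exact Finset.single_le_sum (fun i' _ => hp0 i') (Finset.mem_univ i)⟩
    set W : {S // S ∈ J} → ℝ≥0∞ := fun c =>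
      (∑ x, ENNReal.ofReal (p x) * ENNReal.ofReal (rE ε (c : Finset (Fin k)) x))
        * beta Q ε (c : Finset (Fin k)) with hWdef
    have hmargQ : marginal Q p = ∑ c : {S // S ∈ J}, W c • nu c := by
      rw [marginal]
      rw [Finset.sum_congr rfl fun x _ => by rw [hQx x, Finset.smul_sum]]
      rw [Finset.sum_comm]
      refine Finset.sum_congr rfl fun c _ => ?_
      rw [Finset.sum_congr rfl fun x _ => smul_smul (ENNReal.ofReal (p x)) _ (nu c)]
      rw [← Finset.sum_smul]
      congr 1
      simp only [hWdef]
      rw [Finset.sum_mul]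
      exact Finset.sum_congr rfl fun x _ => by ring
    have hWsum : ∑ c : {S // S ∈ J}, W c = 1 := by
      have h1 : ∀ c : {S // S ∈ J}, W c = ∑ x, ENNReal.ofReal (p x) *
          (ENNReal.ofReal (rE ε (c : Finset (Fin k)) x) * beta Q ε (c : Finset (Fin k))) := by
        intro c
        simp only [hWdef]
        rw [Finset.sum_mul]
        exact Finset.sum_congr rfl fun x _ => by ring
      rw [Finset.sum_congr rfl fun c _ => h1 c, Finset.sum_comm]
      have h2 : ∀ x : Fin k, ∑ c : {S // S ∈ J}, ENNReal.ofReal (p x) *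
          (ENNReal.ofReal (rE ε (c : Finset (Fin k)) x) * beta Q ε (c : Finset (Fin k)))
          = ENNReal.ofReal (p x) := by
        intro x
        rw [← Finset.mul_sum, hJsumE x, mul_one]
      rw [Finset.sum_congr rfl fun x _ => h2 x]
      rw [← ENNReal.ofReal_sum_of_nonneg (fun i _ => hp0 i), hp1, ENNReal.ofReal_one]
    set W' : Fin L → ℝ≥0∞ := fun j => ∑ v, ENNReal.ofReal (p v) * ENNReal.ofReal (q j v)
      with hW'def
    have hW'W : ∀ j, W' j = W (e.symm j) := by
      intro j
      simp only [hW'def, hWdef]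
      rw [Finset.sum_mul]
      refine Finset.sum_congr rfl fun v _ => ?_
      rw [hofReal j v]
      ring
    have hW'sum : ∑ j : Fin L, W' j = 1 := by
      rw [Finset.sum_congr rfl fun j _ => hW'W j, hsumFinL W]
      exact hWsum
    have hmargmat : marginal (matKernel k L q) p
        = ∑ j : Fin L, W' j • Measure.dirac j := by
      rw [marginal]
      have hmatapply : ∀ v : Fin k, ((matKernel k L q) v : Measure (Fin L))
          = ∑ j : Fin L, ENNReal.ofReal (q j v) • Measure.dirac j := fun v => rfl
      rw [Finset.sum_congr rfl fun v _ => by rw [hmatapply v, Finset.smul_sum]]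
      rw [Finset.sum_comm]
      refine Finset.sum_congr rfl fun j _ => ?_
      rw [Finset.sum_congr rfl fun v _ =>
        smul_smul (ENNReal.ofReal (p v)) (ENNReal.ofReal (q j v)) (Measure.dirac j)]
      rw [← Finset.sum_smul]
    have hLHS : ∫⁻ y, ENNReal.ofReal (∑ i, |est' y i - p i| ^ u)
          ∂(Measure.pi fun _ : Fin n => marginal (matKernel k L q) p)
        = ∑ s : Fin n → {S // S ∈ J}, (∏ j, W (s j))
            * ENNReal.ofReal (∑ i, |Edef s i - p i| ^ u) := by
      rw [hmargmat, pi_mixture n W' (fun j => Measure.dirac j) hW'sum]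
      rw [lintegral_finset_sum_measure]
      have hterm : ∀ t : Fin n → Fin L,
          ∫⁻ y, ENNReal.ofReal (∑ i, |est' y i - p i| ^ u)
              ∂((∏ j, W' (t j)) • Measure.pi fun j => Measure.dirac (t j))
            = (∏ j, W' (t j)) * ENNReal.ofReal (∑ i, |est' t i - p i| ^ u) := by
        intro t
        rw [lintegral_smul_measure, pi_dirac, lintegral_dirac, smul_eq_mul]
      rw [Finset.sum_congr rfl fun t _ => hterm t]
      refine Fintype.sum_equiv (Equiv.piCongrRight fun _ : Fin n => e.symm) _ _ fun t => ?_
      congr 1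
      · exact Finset.prod_congr rfl fun j _ => hW'W (t j)
    have hRHS : ∫⁻ y, ENNReal.ofReal (∑ i, |estC y i - p i| ^ u)
          ∂(Measure.pi fun _ : Fin n => marginal Q p)
        = ∑ s : Fin n → {S // S ∈ J}, (∏ j, W (s j))
            * ∫⁻ y, ENNReal.ofReal (∑ i, |estC y i - p i| ^ u)
                ∂(Measure.pi fun j => nu (s j)) := by
      rw [hmargQ, pi_mixture n W nu hWsum, lintegral_finset_sum_measure]
      exact Finset.sum_congr rfl fun s _ => lintegral_smul_measure _ _
    have hJen : ∀ s : Fin n → {S // S ∈ J},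
        ENNReal.ofReal (∑ i, |Edef s i - p i| ^ u)
          ≤ ∫⁻ y, ENNReal.ofReal (∑ i, |estC y i - p i| ^ u)
              ∂(Measure.pi fun j => nu (s j)) := by
      intro s
      calc ENNReal.ofReal (∑ i, |Edef s i - p i| ^ u)
          = ∑ i, ENNReal.ofReal (|Edef s i - p i| ^ u) :=
            ENNReal.ofReal_sum_of_nonneg (fun i _ => Real.rpow_nonneg (abs_nonneg _) u)
        _ ≤ ∑ i, ∫⁻ y, ENNReal.ofReal (|estC y i - p i| ^ u)
              ∂(Measure.pi fun j => nu (s j)) := by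
            refine Finset.sum_le_sum fun i _ => ?_
            exact jensen_loss (Measure.pi fun j => nu (s j)) (fun y => estC y i)
              (hmeasi i) (fun y => cl_mem _) (hpi i) hu
        _ = ∫⁻ y, ∑ i, ENNReal.ofReal (|estC y i - p i| ^ u)
              ∂(Measure.pi fun j => nu (s j)) :=
            (lintegral_finset_sum _ fun i _ =>
              (((hmeasi i).sub measurable_const).abs.pow_const u).ennreal_ofReal).symm
        _ = ∫⁻ y, ENNReal.ofReal (∑ i, |estC y i - p i| ^ u)
              ∂(Measure.pi fun j => nu (s j)) :=
            lintegral_congr fun y =>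
              (ENNReal.ofReal_sum_of_nonneg fun i _ =>
                Real.rpow_nonneg (abs_nonneg _) u).symm
    calc ∫⁻ y, ENNReal.ofReal (∑ i, |est' y i - p i| ^ u)
          ∂(Measure.pi fun _ : Fin n => marginal (matKernel k L q) p)
        = ∑ s : Fin n → {S // S ∈ J}, (∏ j, W (s j))
            * ENNReal.ofReal (∑ i, |Edef s i - p i| ^ u) := hLHS
      _ ≤ ∑ s : Fin n → {S // S ∈ J}, (∏ j, W (s j))
            * ∫⁻ y, ENNReal.ofReal (∑ i, |estC y i - p i| ^ u)
                ∂(Measure.pi fun j => nu (s j)) :=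
          Finset.sum_le_sum fun s _ => mul_le_mul_right (hJen s) _
      _ = ∫⁻ y, ENNReal.ofReal (∑ i, |estC y i - p i| ^ u)
            ∂(Measure.pi fun _ : Fin n => marginal Q p) := hRHS.symm
      _ ≤ ⨆ p' ∈ simplex k, ∫⁻ y, ENNReal.ofReal (∑ i, |estC y i - p' i| ^ u)
            ∂(Measure.pi fun _ : Fin n => marginal Q p') :=
          le_iSup₂ (f := fun p' (_ : p' ∈ simplex k) =>
            ∫⁻ y, ENNReal.ofReal (∑ i, |estC y i - p' i| ^ u)
              ∂(Measure.pi fun _ : Fin n => marginal Q p')) p hp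
  have hclamp : risk k n u Q estC ≤ risk k n u Q est := by
    rw [risk, risk]
    refine iSup₂_le fun p hp => ?_
    refine le_trans (lintegral_mono fun y => ?_)
      (le_iSup₂ (f := fun p' (_ : p' ∈ simplex k) =>
        ∫⁻ y, ENNReal.ofReal (∑ i, |est y i - p' i| ^ u)
          ∂(Measure.pi fun _ : Fin n => marginal Q p')) p hp)
    apply ENNReal.ofReal_le_ofReal
    refine Finset.sum_le_sum fun i _ => ?_
    refine Real.rpow_le_rpow (abs_nonneg _) (cl_abs_le ?_ _) (by linarith)
    exact ⟨hp.1 i, by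
      rw [← hp.2]
      exact Finset.single_le_sum (fun i' _ => hp.1 i') (Finset.mem_univ i)⟩
  have h1 : minimaxRisk k n u (matKernel k L q) ≤ risk k n u (matKernel k L q) est' := by
    rw [_root_.minimaxRisk]
    exact iInf₂_le est' (measurable_of_countable est')
  exact h1.trans (hkey.trans hclamp)


end MainProof

theorem statement5 {Y : Type} [MeasurableSpace Y] (k : ℕ) (hk : 2 ≤ k) (ε u : ℝ)
    (hε : 0 < ε) (hu : 1 ≤ u) (n : ℕ) (hn : 1 ≤ n)
    (Q : Kernel (Fin k) Y) (hQ : IsPrivate ε Q) :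
    ⨅ (L : ℕ) (q : Fin L → Fin k → ℝ) (_ : memDEE k L ε q),
        minimaxRisk k n u (matKernel k L q) ≤ minimaxRisk k n u Q := by
  obtain ⟨L, q, hmem, hle⟩ := extremal_dominates k hk ε u hε hu n Q hQ
  exact iInf_le_of_le L (iInf_le_of_le q (iInf_le_of_le hmem hle))
end

section
/- Let k ≥ 2 and ε > 0. For every scheme Q ∈ D_{ε,E} with output alphabet Y = {1,…,L} and every j ∈ {1,…,L}, Σ_{i=1}^k q_{ji}^2 / q_j^2 ≤ k (1 + (e^ε − 1)^2 · d*(k − d*)/(d* e^ε + k − d*)^2). -/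
open MeasureTheory ProbabilityTheory Filter Real
open scoped ENNReal NNReal

theorem statement6 (k L : ℕ) (hk : 2 ≤ k) (ε : ℝ) (hε : 0 < ε)
    (q : Fin L → Fin k → ℝ) (hq : memDEE k L ε q)
    (dstar : ℕ) (hd : IsOptDstar k ε dstar) (j : Fin L) :
    ∑ i, (q j i)^2 / (qrow q j)^2 ≤
      (k:ℝ) * (1 + (Real.exp ε - 1)^2 *
        ((dstar:ℝ) * ((k:ℝ) - dstar) / (((dstar:ℝ) * Real.exp ε + (k:ℝ) - dstar)^2))) := by
  classical
  obtain ⟨hq0, hq1, hq2, hq3⟩ := hq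
  haveI : Nonempty (Fin k) := ⟨⟨0, by omega⟩⟩
  obtain ⟨v0, hv0⟩ := Finite.exists_min (fun v => q j v)
  have hm : (⨅ v', q j v') = q j v0 :=
    le_antisymm (ciInf_le (Set.Finite.bddBelow (Set.finite_range _)) v0) (le_ciInf hv0)
  set e := Real.exp ε with he
  set m := q j v0 with hmdef
  have hE1 : (1:ℝ) < e := by
    have := Real.add_one_le_exp ε; rw [he]; linarith
  have hmne : m ≠ 0 := by
    intro h
    have h3 := hq3 j v0
    rw [hm, ← hmdef, h, div_zero] at h3
    simp only [Set.mem_insert_iff, Set.mem_singleton_iff] at h3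
    rcases h3 with h3 | h3
    · norm_num at h3
    · exact absurd h3.symm (Real.exp_pos ε).ne'
  have hmpos : 0 < m := lt_of_le_of_ne (hq0 j v0) (Ne.symm hmne)
  have hcases : ∀ v, q j v = m ∨ q j v = m * e := by
    intro v
    have h3 := hq3 j v
    rw [hm] at h3
    simp only [Set.mem_insert_iff, Set.mem_singleton_iff] at h3
    rcases h3 with h3 | h3
    · left; rw [div_eq_iff hmne] at h3; rw [h3]; ring
    · right; rw [div_eq_iff hmne] at h3; rw [h3]; ring
  set A : Finset (Fin k) := Finset.univ.filter (fun v => q j v = m * e) with hA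
  set B : Finset (Fin k) := Finset.univ.filter (fun v => ¬ q j v = m * e) with hB
  have hcard : A.card + B.card = k := by
    rw [hA, hB, Finset.card_filter_add_card_filter_not, Finset.card_univ,
      Fintype.card_fin]
  have hBv0 : v0 ∈ B := by
    rw [hB, Finset.mem_filter]
    refine ⟨Finset.mem_univ _, fun h => ?_⟩
    rw [← hmdef] at h
    have h' : m * 1 = m * e := by rw [mul_one]; exact h
    have := mul_left_cancel₀ hmne h'
    linarith
  have hB1 : 1 ≤ B.card := Finset.card_pos.2 ⟨v0, hBv0⟩
  set a : ℝ := (A.card : ℝ) with ha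
  set b : ℝ := (B.card : ℝ) with hb
  have ha0 : 0 ≤ a := Nat.cast_nonneg _
  have hb1 : (1:ℝ) ≤ b := by rw [hb]; exact_mod_cast hB1
  have hab : a + b = (k:ℝ) := by rw [ha, hb]; exact_mod_cast hcard
  have hk2 : (2:ℝ) ≤ (k:ℝ) := by exact_mod_cast hk
  have hsum : ∑ v, q j v = a * (m * e) + b * m := by
    rw [← Finset.sum_filter_add_sum_filter_not Finset.univ (fun v => q j v = m * e)]
    congr 1
    · rw [Finset.sum_congr rfl (fun v hv => (Finset.mem_filter.1 hv).2), Finset.sum_const,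
        nsmul_eq_mul]
    · rw [Finset.sum_congr rfl (fun v hv => ?_), Finset.sum_const, nsmul_eq_mul]
      rcases hcases v with h | h
      · exact h
      · exact absurd h (Finset.mem_filter.1 hv).2
  have hsum2 : ∑ v, (q j v)^2 = a * (m * e)^2 + b * m^2 := by
    rw [← Finset.sum_filter_add_sum_filter_not Finset.univ (fun v => q j v = m * e)]
    congr 1
    · rw [Finset.sum_congr rfl (fun v hv => by rw [(Finset.mem_filter.1 hv).2]),
        Finset.sum_const, nsmul_eq_mul]
    · rw [Finset.sum_congr rfl (fun v hv => ?_), Finset.sum_const, nsmul_eq_mul]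
      rcases hcases v with h | h
      · rw [h]
      · exact absurd h (Finset.mem_filter.1 hv).2
  have hSpos : 0 < a * e + b := by nlinarith
  have hkpos : (0:ℝ) < (k:ℝ) := by linarith
  have hqrow : qrow q j = m * (a * e + b) / k := by
    rw [qrow, hsum]; field_simp
  have hLHS : ∑ i, (q j i)^2 / (qrow q j)^2 = (k:ℝ)^2 * (a * e^2 + b) / (a * e + b)^2 := by
    rw [← Finset.sum_div, hsum2, hqrow]
    have hne1 : ((m * (a * e + b))^2) ≠ 0 := pow_ne_zero _ (mul_ne_zero hmne hSpos.ne')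
    have hne2 : ((a * e + b)^2) ≠ 0 := pow_ne_zero _ hSpos.ne'
    rw [div_pow, div_div_eq_mul_div, div_eq_div_iff hne1 hne2]
    ring
  -- bounds on dstar
  obtain ⟨hds1n, hds2n⟩ := Finset.mem_Icc.1 hd.1
  have hds1 : (1:ℝ) ≤ (dstar:ℝ) := by exact_mod_cast hds1n
  have hds2 : (dstar:ℝ) ≤ (k:ℝ) - 1 := by
    have : ((dstar:ℕ):ℝ) ≤ ((k - 1 : ℕ):ℝ) := by exact_mod_cast hds2n
    rwa [Nat.cast_sub (by omega), Nat.cast_one] at this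
  have hdsS : 0 < (dstar:ℝ) * e + (k:ℝ) - (dstar:ℝ) := by nlinarith
  have hdsP : 0 < (dstar:ℝ) * ((k:ℝ) - (dstar:ℝ)) := by nlinarith
  have hgstar : 0 < gfun ε k dstar := by
    rw [gfun, ← he]
    exact div_pos (by positivity) hdsP
  have hkey : a * b / (a * e + b)^2 ≤
      (dstar:ℝ) * ((k:ℝ) - (dstar:ℝ)) / (((dstar:ℝ) * e + (k:ℝ) - (dstar:ℝ))^2) := by
    rcases Nat.eq_zero_or_pos A.card with hA0 | hA1
    · have h0 : a = 0 := by rw [ha, hA0]; norm_num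
      rw [h0, zero_mul, zero_div]
      positivity
    · have hmem : A.card ∈ Finset.Icc 1 (k - 1) := Finset.mem_Icc.2 ⟨hA1, by omega⟩
      have hgle := hd.2 A.card hmem
      have h1 : 1 / gfun ε k A.card ≤ 1 / gfun ε k dstar :=
        one_div_le_one_div_of_le hgstar hgle
      rw [gfun, gfun, ← he, one_div_div, one_div_div] at h1
      have hba : (k:ℝ) - a = b := by linarith
      rw [← ha, hba] at h1
      have harr : a * e + (k:ℝ) - a = a * e + b := by linarith
      rwa [harr] at h1
  rw [hLHS]
  have hne2 : ((a * e + b)^2) ≠ 0 := pow_ne_zero _ hSpos.ne'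
  have hiden : (k:ℝ)^2 * (a * e^2 + b) = (k:ℝ) * (a * e + b)^2 + (k:ℝ) * (e - 1)^2 * (a * b) := by
    have hbk : b = (k:ℝ) - a := by linarith
    rw [hbk]; ring
  calc (k:ℝ)^2 * (a * e^2 + b) / (a * e + b)^2
      = (k:ℝ) + (k:ℝ) * (e - 1)^2 * (a * b / (a * e + b)^2) := by
        rw [hiden, add_div, mul_div_assoc, div_self hne2, mul_one, mul_div_assoc]
    _ ≤ (k:ℝ) + (k:ℝ) * (e - 1)^2 *
        ((dstar:ℝ) * ((k:ℝ) - (dstar:ℝ)) / (((dstar:ℝ) * e + (k:ℝ) - (dstar:ℝ))^2)) :=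
        add_le_add_right (mul_le_mul_of_nonneg_left hkey (by positivity)) _
    _ = (k:ℝ) * (1 + (e - 1)^2 *
        ((dstar:ℝ) * ((k:ℝ) - (dstar:ℝ)) / (((dstar:ℝ) * e + (k:ℝ) - (dstar:ℝ))^2))) := by
        ring
end

section
/- Let ε > 0 and let k > 0 be a real number. The function g(s) = (s e^ε + k − s)^2 / (s(k − s)) on the open interval (0, k) is strictly decreasing on (0, k/(e^ε + 1)] and strictly increasing on [k/(e^ε + 1), k); in particular, g attains its unique global minimum on (0, k) at s* = k/(e^ε + 1). -/
open MeasureTheory ProbabilityTheory Filter Real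
open scoped ENNReal NNReal

lemma keyA (ε k : ℝ) (hk : 0 < k) (ha : 1 < Real.exp ε) :
    ∀ s t : ℝ, 0 < s → s < t → t ≤ k / (Real.exp ε + 1) → gfun ε k t < gfun ε k s := by
  intro s t hs hst htk
  set a := Real.exp ε with hadef
  have htk' : t < k := lt_of_le_of_lt htk (div_lt_self hk (by linarith))
  have ht : 0 < t := hs.trans hst
  have hsk : s < k := hst.trans htk'
  have hd1 : 0 < t * (k - t) := mul_pos ht (by linarith)
  have hd2 : 0 < s * (k - s) := mul_pos hs (by linarith)
  have hc : 0 ≤ k - (a + 1) * t := by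
    have := (le_div_iff₀ (show (0:ℝ) < a + 1 by linarith)).mp htk
    nlinarith
  have haa : (0:ℝ) < a * (a + 1) := by nlinarith
  unfold gfun
  rw [div_lt_div_iff₀ hd1 hd2]
  nlinarith [mul_pos (mul_pos hk (sub_pos.2 hst)) (mul_pos (mul_pos haa ht) (sub_pos.2 hst)),
    mul_nonneg (mul_nonneg hk.le (sub_pos.2 hst).le) (mul_nonneg hc hc),
    mul_nonneg (mul_nonneg hk.le (sub_pos.2 hst).le)
      (mul_nonneg hc (by nlinarith : (0:ℝ) ≤ (2*a+1)*t - s))]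

lemma keyB (ε k : ℝ) (hk : 0 < k) (ha : 1 < Real.exp ε) :
    ∀ s t : ℝ, k / (Real.exp ε + 1) ≤ s → s < t → t < k → gfun ε k s < gfun ε k t := by
  intro s t hks hst htk
  set a := Real.exp ε with hadef
  have hs : 0 < s := lt_of_lt_of_le (div_pos hk (by linarith)) hks
  have ht : 0 < t := hs.trans hst
  have hsk : s < k := hst.trans htk
  have hd1 : 0 < s * (k - s) := mul_pos hs (by linarith)
  have hd2 : 0 < t * (k - t) := mul_pos ht (by linarith)
  have hc0 : 0 ≤ (a + 1) * s - k := by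
    have := (div_le_iff₀ (show (0:ℝ) < a + 1 by linarith)).mp hks
    nlinarith
  have haa : (0:ℝ) < a * (a + 1) := by nlinarith
  unfold gfun
  rw [div_lt_div_iff₀ hd1 hd2]
  nlinarith [mul_pos (mul_pos hk (sub_pos.2 hst)) (mul_pos (mul_pos haa hs) (sub_pos.2 hst)),
    mul_nonneg (mul_nonneg hk.le (sub_pos.2 hst).le)
      (mul_nonneg hc0 (by nlinarith : (0:ℝ) ≤ (2*a+1)*s - t - ((a+1)*s - k)))]

theorem statement8 (ε k : ℝ) (hε : 0 < ε) (hk : 0 < k) :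
    StrictAntiOn (gfun ε k) (Set.Ioc 0 (k / (Real.exp ε + 1))) ∧
    StrictMonoOn (gfun ε k) (Set.Ico (k / (Real.exp ε + 1)) k) ∧
    ∀ s ∈ Set.Ioo 0 k, s ≠ k / (Real.exp ε + 1) →
      gfun ε k (k / (Real.exp ε + 1)) < gfun ε k s := by
  
  have ha : 1 < Real.exp ε := by nlinarith [Real.add_one_le_exp ε]
  refine ⟨?_, ?_, ?_⟩
  · intro s hs t ht hst
    exact keyA ε k hk ha s t hs.1 hst ht.2
  · intro s hs t ht hst
    exact keyB ε k hk ha s t hs.1 hst ht.2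
  · intro s hs hne
    rcases lt_or_gt_of_ne hne with h | h
    · exact keyA ε k hk ha s _ hs.1 h le_rfl
    · exact keyB ε k hk ha _ s le_rfl h hs.2
end

section
/- Let X be a real random variable with probability density function φ satisfying φ(x) = φ(2μ − x) for all x ∈ ℝ, where μ = E X is finite, and let u ≥ 1 be such that E|X|^u < ∞. Then for every a ∈ ℝ, E|X − μ|^u ≤ E|X − a|^u; that is, the mean μ minimizes a ↦ E|X − a|^u. -/
open MeasureTheory ProbabilityTheory Filter Real
open scoped ENNReal NNReal

private lemma statement10_half_rpow {u : ℝ} (hu : 1 ≤ u) {a b : ℝ} (ha : 0 ≤ a) (hb : 0 ≤ b) :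
    ((a + b) / 2) ^ u ≤ (a ^ u + b ^ u) / 2 := by
  have h := NNReal.rpow_arith_mean_le_arith_mean2_rpow (1/2) (1/2)
    a.toNNReal b.toNNReal (by rw [← two_mul]; norm_num) hu
  have h2 := NNReal.coe_le_coe.mpr h
  push_cast at h2
  rw [Real.coe_toNNReal a ha, Real.coe_toNNReal b hb] at h2
  rw [show (a+b)/2 = 1/2*a + 1/2*b by ring, show (a^u+b^u)/2 = 1/2*a^u + 1/2*b^u by ring]
  exact h2

theorem statement10 (P : Measure ℝ) [IsProbabilityMeasure P] (φ : ℝ → ℝ≥0∞)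
    (hP : P = MeasureTheory.volume.withDensity φ)
    (hint : Integrable (fun x => x) P)
    (μ : ℝ) (hμ : μ = ∫ x, x ∂P)
    (hsym : ∀ x, φ x = φ (2*μ - x))
    (u : ℝ) (hu : 1 ≤ u) (hmom : Integrable (fun x => |x| ^ u) P) :
    ∀ a : ℝ, ∫ x, |x - μ| ^ u ∂P ≤ ∫ x, |x - a| ^ u ∂P := by

  intro a
  have hu0 : (0:ℝ) ≤ u := le_trans zero_le_one hu
  set e : ℝ ≃ᵐ ℝ := MeasurableEquiv.subLeft (2*μ) with he
  have hecoe : ∀ x : ℝ, e x = 2*μ - x := fun x => rfl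
  have hmapvol : MeasurePreserving (fun x : ℝ => 2*μ - x) volume volume :=
    Measure.measurePreserving_sub_left volume (2*μ)
  have hPmap : P.map e = P := by
    ext s hs
    rw [MeasurableEquiv.map_apply, hP, withDensity_apply _ (hs.preimage e.measurable),
      withDensity_apply _ hs]
    calc ∫⁻ x in e ⁻¹' s, φ x ∂volume
        = ∫⁻ x in e ⁻¹' s, φ (e x) ∂volume := by
          refine lintegral_congr fun x => ?_
          rw [hecoe x]; exact hsym x
      _ = ∫⁻ y, φ y ∂((volume.restrict (e ⁻¹' s)).map e) :=
          (MeasureTheory.lintegral_map_equiv φ e).symm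
      _ = ∫⁻ y in s, φ y ∂volume := by
          rw [← Measure.restrict_map e.measurable hs]
          congr 1
          have : volume.map e = volume.map (fun x : ℝ => 2*μ - x) := rfl
          rw [this, hmapvol.map_eq]
  have hsymint : ∀ c : ℝ, ∫ x, |x - c| ^ u ∂P = ∫ x, |x - (2*μ - c)| ^ u ∂P := by
    intro c
    conv_lhs => rw [← hPmap]
    rw [MeasureTheory.integral_map_equiv]
    refine integral_congr_ae (Filter.Eventually.of_forall fun x => ?_)
    show |e x - c| ^ u = |x - (2*μ - c)| ^ u
    rw [hecoe x, show (2*μ - x - c : ℝ) = (2*μ - c) - x by ring, abs_sub_comm]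
  have hInt : ∀ c : ℝ, Integrable (fun x => |x - c| ^ u) P := by
    intro c
    have hmeas : AEStronglyMeasurable (fun x : ℝ => |x - c| ^ u) P :=
      (((continuous_id.sub continuous_const).abs).rpow_const
        (fun x => Or.inr hu0)).aestronglyMeasurable
    refine ((hmom.add (integrable_const (|c| ^ u))).const_mul (2^u)).mono' hmeas ?_
    refine Filter.Eventually.of_forall fun x => ?_
    rw [Real.norm_eq_abs, abs_of_nonneg (Real.rpow_nonneg (abs_nonneg _) u)]
    calc |x - c| ^ u ≤ (|x| + |c|) ^ u :=
          Real.rpow_le_rpow (abs_nonneg _) (abs_sub x c) hu0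
      _ = (2 * ((|x| + |c|)/2)) ^ u := by rw [show 2 * ((|x| + |c|)/2) = |x| + |c| by ring]
      _ = 2 ^ u * ((|x| + |c|)/2) ^ u := Real.mul_rpow (by norm_num) (by positivity)
      _ ≤ 2 ^ u * ((|x|^u + |c|^u)/2) := by
          refine mul_le_mul_of_nonneg_left
            (statement10_half_rpow hu (abs_nonneg _) (abs_nonneg _))
            (Real.rpow_nonneg (by norm_num) u)
      _ ≤ 2 ^ u * (|x|^u + |c|^u) := by
          refine mul_le_mul_of_nonneg_left ?_ (Real.rpow_nonneg (by norm_num) u)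
          have h1 : (0:ℝ) ≤ |x|^u + |c|^u := by positivity
          linarith
  have hpt : ∀ x : ℝ, |x - μ| ^ u ≤ (|x - a| ^ u + |x - (2*μ - a)| ^ u) / 2 := by
    intro x
    have h1 : |x - μ| ≤ (|x - a| + |x - (2*μ - a)|) / 2 := by
      have h2 : x - μ = ((x - a) + (x - (2*μ - a))) / 2 := by ring
      rw [h2, abs_div, abs_two]
      gcongr
      exact abs_add_le _ _
    calc |x - μ| ^ u ≤ ((|x - a| + |x - (2*μ - a)|) / 2) ^ u :=
          Real.rpow_le_rpow (abs_nonneg _) h1 hu0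
      _ ≤ (|x - a| ^ u + |x - (2*μ - a)| ^ u) / 2 :=
          statement10_half_rpow hu (abs_nonneg _) (abs_nonneg _)
  calc ∫ x, |x - μ| ^ u ∂P
      ≤ ∫ x, (|x - a| ^ u + |x - (2*μ - a)| ^ u) / 2 ∂P :=
        integral_mono (hInt μ) (((hInt a).add (hInt _)).div_const 2) hpt
    _ = ((∫ x, |x - a| ^ u ∂P) + ∫ x, |x - (2*μ - a)| ^ u ∂P) / 2 := by
        rw [integral_div, integral_add (hInt a) (hInt _)]
    _ = ∫ x, |x - a| ^ u ∂P := by rw [← hsymint a]; ring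
end

section
/- Let k ≥ 2, ε > 0, 1 ≤ d ≤ k−1, n ≥ 1 and p ∈ Δ_k. If Y^n consists of n i.i.d. samples with distribution m = p Q_{k,ε,d}, then the empirical estimator is unbiased: E p̂_i(Y^n) = p_i for every i ∈ {1,…,k}; equivalently, the probability that the i-th coordinate of a single privatized sample equals 1 is (p_i + B)/A. -/
open MeasureTheory ProbabilityTheory Filter Real
open scoped ENNReal NNReal

-- helper lemmas (auxiliary, added above the theorem)
section Helpers

lemma card_pcc_filter_mem {α : Type*} [DecidableEq α] {s : Finset α} {a : α}
    (ha : a ∈ s) (e : ℕ) :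
    ((s.powersetCard (e+1)).filter (fun S => a ∈ S)).card = (s.card - 1).choose e := by
  rw [← Finset.card_erase_of_mem ha, ← Finset.card_powersetCard]
  apply Finset.card_bij' (fun S _ => S.erase a) (fun T _ => insert a T)
  case left_inv =>
    intro S hS
    simp only [Finset.mem_filter] at hS
    exact Finset.insert_erase hS.2
  case right_inv =>
    intro T hT
    simp only [Finset.mem_powersetCard] at hT
    have haT : a ∉ T := fun h => (Finset.mem_erase.1 (hT.1 h)).1 rfl
    exact Finset.erase_insert haT
  · intro S hS
    simp only [Finset.mem_filter, Finset.mem_powersetCard] at hS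
    obtain ⟨⟨hsub, hcard⟩, haS⟩ := hS
    simp only [Finset.mem_powersetCard]
    exact ⟨Finset.erase_subset_erase a hsub, by simp [Finset.card_erase_of_mem haS, hcard]⟩
  · intro T hT
    simp only [Finset.mem_powersetCard] at hT
    obtain ⟨hsub, hcard⟩ := hT
    have haT : a ∉ T := fun h => (Finset.mem_erase.1 (hsub h)).1 rfl
    simp only [Finset.mem_filter, Finset.mem_powersetCard]
    refine ⟨⟨?_, ?_⟩, Finset.mem_insert_self a T⟩
    · exact Finset.insert_subset ha (hsub.trans (Finset.erase_subset a s))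
    · rw [Finset.card_insert_of_notMem haT, hcard]

lemma card_pcc_filter_mem_mul {α : Type*} [DecidableEq α] {s : Finset α} {a : α}
    (ha : a ∈ s) (e : ℕ) :
    ((s.powersetCard e).filter (fun S => a ∈ S)).card * s.card = e * s.card.choose e := by
  cases e with
  | zero =>
    simp [Finset.powersetCard_zero, Finset.filter_singleton]
  | succ f =>
    rw [card_pcc_filter_mem ha f]
    obtain ⟨m, hm⟩ : ∃ m, s.card = m + 1 :=
      ⟨s.card - 1, (Nat.succ_pred_eq_of_pos (Finset.card_pos.2 ⟨a, ha⟩)).symm⟩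
    rw [hm]
    simp only [Nat.add_sub_cancel]
    rw [mul_comm (f+1) _, ← Nat.add_one_mul_choose_eq]
    ring

lemma pcc_filter_not_mem {α : Type*} [DecidableEq α] (s : Finset α) (a : α) (d : ℕ) :
    (s.powersetCard d).filter (fun S => a ∉ S) = (s.erase a).powersetCard d := by
  ext S
  simp only [Finset.mem_filter, Finset.mem_powersetCard, Finset.subset_erase]
  tauto

lemma sum_pcc_filter_mem {α : Type*} [DecidableEq α] {s : Finset α} {a : α}
    (ha : a ∈ s) (e : ℕ) (p : α → ℝ) :
    ∑ S ∈ (s.powersetCard (e+1)).filter (fun S => a ∈ S), ∑ v ∈ S, p v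
      = ((s.card - 1).choose e : ℝ) * p a + ∑ T ∈ (s.erase a).powersetCard e, ∑ v ∈ T, p v := by
  have hb : ∑ S ∈ (s.powersetCard (e+1)).filter (fun S => a ∈ S), ∑ v ∈ S, p v
      = ∑ T ∈ (s.erase a).powersetCard e, (p a + ∑ v ∈ T, p v) := by
    apply Finset.sum_bij' (fun S _ => S.erase a) (fun T _ => insert a T)
    case hi =>
      intro S hS
      simp only [Finset.mem_filter, Finset.mem_powersetCard] at hS
      obtain ⟨⟨hsub, hcard⟩, haS⟩ := hS
      simp only [Finset.mem_powersetCard]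
      exact ⟨Finset.erase_subset_erase a hsub, by simp [Finset.card_erase_of_mem haS, hcard]⟩
    case hj =>
      intro T hT
      simp only [Finset.mem_powersetCard] at hT
      obtain ⟨hsub, hcard⟩ := hT
      have haT : a ∉ T := fun h => (Finset.mem_erase.1 (hsub h)).1 rfl
      simp only [Finset.mem_filter, Finset.mem_powersetCard]
      refine ⟨⟨?_, ?_⟩, Finset.mem_insert_self a T⟩
      · exact Finset.insert_subset ha (hsub.trans (Finset.erase_subset a s))
      · rw [Finset.card_insert_of_notMem haT, hcard]
    case left_neg =>
      intro S hS
      simp only [Finset.mem_filter] at hS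
      exact Finset.insert_erase hS.2
    case right_neg =>
      intro T hT
      simp only [Finset.mem_powersetCard] at hT
      have haT : a ∉ T := fun h => (Finset.mem_erase.1 (hT.1 h)).1 rfl
      exact Finset.erase_insert haT
    case h =>
      intro S hS
      simp only [Finset.mem_filter] at hS
      exact (Finset.add_sum_erase S p hS.2).symm
  rw [hb, Finset.sum_add_distrib, Finset.sum_const, Finset.card_powersetCard,
    Finset.card_erase_of_mem ha, nsmul_eq_mul]

lemma sum_pcc_weight {α : Type*} [DecidableEq α] (s : Finset α) (e : ℕ) (p : α → ℝ) :
    (∑ T ∈ s.powersetCard e, ∑ v ∈ T, p v) * (s.card : ℝ)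
      = (e : ℝ) * (s.card.choose e : ℝ) * ∑ v ∈ s, p v := by
  have h1 : ∑ T ∈ s.powersetCard e, ∑ v ∈ T, p v
      = ∑ v ∈ s, (((s.powersetCard e).filter (fun T => v ∈ T)).card : ℝ) * p v := by
    rw [show ∑ T ∈ s.powersetCard e, ∑ v ∈ T, p v
        = ∑ T ∈ s.powersetCard e, ∑ v ∈ s, (if v ∈ T then p v else 0) from
      Finset.sum_congr rfl fun T hT => by
        rw [← Finset.sum_filter, Finset.filter_mem_eq_inter,
          Finset.inter_eq_right.2 (Finset.mem_powersetCard.1 hT).1]]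
    rw [Finset.sum_comm]
    exact Finset.sum_congr rfl fun v _ => by
      rw [← Finset.sum_filter, Finset.sum_const, nsmul_eq_mul]
  rw [h1, Finset.sum_mul, Finset.mul_sum]
  refine Finset.sum_congr rfl fun v hv => ?_
  have hc : ((((s.powersetCard e).filter (fun T => v ∈ T)).card : ℕ) : ℝ) * (s.card : ℝ)
      = (e : ℝ) * (s.card.choose e : ℝ) := by exact_mod_cast card_pcc_filter_mem_mul hv e
  linear_combination p v * hc

end Helpers

set_option maxHeartbeats 1000000 in
theorem statement12 (k : ℕ) (hk : 2 ≤ k) (ε : ℝ) (hε : 0 < ε) (d n : ℕ)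
    (hd1 : 1 ≤ d) (hdk : d ≤ k - 1) (hn : 1 ≤ n)
    (p : Fin k → ℝ) (hp : p ∈ simplex k) (i : Fin k) :
    (∑ y : Fin n → Out k d, (∏ j, margP k ε d p (y j)) * empEst k d n ε y i = p i) ∧
    (∑ y ∈ Finset.univ.filter (fun y : Out k d => i ∈ y.1), margP k ε d p y =
        (p i + Bconst k d ε) / Aconst k d ε) := by
  classical
  obtain ⟨hpnn, hpsum⟩ := hp
  obtain ⟨e, rfl⟩ : ∃ e, d = e + 1 := ⟨d - 1, by omega⟩
  have hek : e + 1 ≤ k - 1 := hdk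
  have hkpos : 1 ≤ k := by omega
  set E := Real.exp ε with hEdef
  have hE1 : 1 < E := by rw [hEdef]; exact Real.one_lt_exp_iff.2 hε
  set c1 : ℝ := (((k-1).choose e : ℕ) : ℝ) with hc1def
  set c2 : ℝ := (((k-1).choose (e+1) : ℕ) : ℝ) with hc2def
  have hc1pos : 0 < c1 := by
    rw [hc1def]
    exact_mod_cast Nat.choose_pos (by omega : e ≤ k - 1)
  have hc2nn : 0 ≤ c2 := Nat.cast_nonneg _
  have hD0pos : 0 < c1 * E + c2 := by nlinarith
  have hcastk1 : ((k - 1 : ℕ) : ℝ) = (k : ℝ) - 1 := by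
    push_cast [Nat.cast_sub hkpos]; ring
  have hkD : (e:ℝ) + 1 + 1 ≤ (k:ℝ) := by
    have : e + 2 ≤ k := by omega
    exact_mod_cast this
  have hR1 : c2 * ((e:ℝ)+1) = c1 * ((k:ℝ) - ((e:ℝ)+1)) := by
    have h := Nat.choose_succ_right_eq (k-1) e
    have hcast : (((k-1).choose (e+1) * (e+1) : ℕ) : ℝ) = (((k-1).choose e * (k-1-e) : ℕ) : ℝ) := by
      exact_mod_cast congrArg (fun x : ℕ => (x : ℝ)) h
    have hsub : ((k - 1 - e : ℕ) : ℝ) = (k:ℝ) - ((e:ℝ)+1) := by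
      push_cast [Nat.cast_sub (by omega : e ≤ k - 1), Nat.cast_sub hkpos]; ring
    rw [Nat.cast_mul, Nat.cast_mul, hsub] at hcast
    push_cast at hcast ⊢
    linarith [hcast]
  -- the scheme probabilities as a function of the underlying finset
  have hsP : ∀ (v : Fin k) (y : Out k (e+1)),
      schemeP k ε (e+1) v y = (if v ∈ y.1 then E else 1) / (c1 * E + c2) := by
    intro v y
    simp only [schemeP, Nat.add_sub_cancel, hc1def, hc2def, hEdef]
  -- conversion between sums over `Out k (e+1)` and sums over `powersetCard`
  have hOut : ∀ f : Finset (Fin k) → ℝ,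
      ∑ y : Out k (e+1), f y.1 = ∑ S ∈ Finset.univ.powersetCard (e+1), f S := by
    intro f
    exact (Finset.sum_subtype _ (fun S => by simp [Finset.mem_powersetCard]) f).symm
  have hcardU : (Finset.univ : Finset (Fin k)).card = k := by simp
  -- each row of the scheme sums to one
  have hScount : ∀ v : Fin k,
      ∑ y : Out k (e+1), schemeP k ε (e+1) v y = 1 := by
    intro v
    simp_rw [hsP v]
    rw [hOut (fun S => (if v ∈ S then E else 1) / (c1 * E + c2)), ← Finset.sum_div,
      Finset.sum_ite, Finset.sum_const, Finset.sum_const,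
      card_pcc_filter_mem (Finset.mem_univ v) e, pcc_filter_not_mem,
      Finset.card_powersetCard, Finset.card_erase_of_mem (Finset.mem_univ v), hcardU]
    rw [nsmul_eq_mul, nsmul_eq_mul, mul_one]
    rw [hc1def, hc2def] at hD0pos ⊢
    field_simp
  -- the marginal probability of each output finset
  have hmargP : ∀ y : Out k (e+1),
      margP k ε (e+1) p y = (1 + (E-1) * ∑ v ∈ y.1, p v) / (c1 * E + c2) := by
    intro y
    rw [margP]
    simp_rw [hsP]
    have h1 : ∀ v : Fin k, p v * ((if v ∈ y.1 then E else 1) / (c1 * E + c2))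
        = (p v + (E-1) * (if v ∈ y.1 then p v else 0)) / (c1 * E + c2) := by
      intro v; split_ifs <;> ring
    simp_rw [h1]
    rw [← Finset.sum_div]
    congr 1
    rw [Finset.sum_add_distrib, hpsum, ← Finset.mul_sum, ← Finset.sum_filter,
      Finset.filter_mem_eq_inter, Finset.univ_inter]
  -- the marginal sums to one
  have hm1 : ∑ y : Out k (e+1), margP k ε (e+1) p y = 1 := by
    simp_rw [margP, Finset.sum_comm (f := fun (y : Out k (e+1)) (v : Fin k) => p v * schemeP k ε (e+1) v y)]
    calc ∑ v, ∑ y : Out k (e+1), p v * schemeP k ε (e+1) v y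
        = ∑ v, p v * ∑ y : Out k (e+1), schemeP k ε (e+1) v y := by
          simp_rw [Finset.mul_sum]
      _ = ∑ v, p v := by simp_rw [hScount]; simp
      _ = 1 := hpsum
  -- the key marginal probability of {y : i ∈ y}
  set mi : ℝ := ∑ y ∈ Finset.univ.filter (fun y : Out k (e+1) => i ∈ y.1),
      margP k ε (e+1) p y with hmidef
  have hAB : mi = (p i + Bconst k (e+1) ε) / Aconst k (e+1) ε := by
    rw [hmidef, Finset.sum_filter]
    simp_rw [hmargP]
    rw [hOut (fun S => if i ∈ S then (1 + (E-1) * ∑ v ∈ S, p v) / (c1 * E + c2) else 0),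
      ← Finset.sum_filter]
    rw [← Finset.sum_div, Finset.sum_add_distrib, Finset.sum_const, nsmul_eq_mul,
      card_pcc_filter_mem (Finset.mem_univ i) e, hcardU, ← Finset.mul_sum,
      sum_pcc_filter_mem (Finset.mem_univ i) e p, hcardU]
    set W : ℝ := ∑ T ∈ (Finset.univ.erase i).powersetCard e, ∑ v ∈ T, p v with hWdef
    have hWeq : W * ((k:ℝ) - 1) = (e:ℝ) * c1 * (1 - p i) := by
      have h := sum_pcc_weight (Finset.univ.erase i) e p
      rw [Finset.card_erase_of_mem (Finset.mem_univ i), hcardU, hcastk1] at h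
      have hsum_erase : ∑ v ∈ Finset.univ.erase i, p v = 1 - p i := by
        have := Finset.add_sum_erase Finset.univ p (Finset.mem_univ i)
        rw [hpsum] at this
        linarith
      rw [hsum_erase] at h
      rw [hWdef, h, hc1def]
    have hWval : W = (e:ℝ) * c1 * (1 - p i) / ((k:ℝ) - 1) := by
      rw [eq_div_iff (by linarith : (k:ℝ) - 1 ≠ 0)]
      exact hWeq
    rw [hWval]
    rw [Aconst, Bconst]
    rw [← hEdef]
    have hc2val : c2 = c1 * ((k:ℝ) - ((e:ℝ)+1)) / ((e:ℝ)+1) := by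
      rw [eq_div_iff (by positivity : (e:ℝ)+1 ≠ 0)]
      linarith [hR1]
    rw [hc2val]
    have hd1R : ((e+1 : ℕ) : ℝ) = (e:ℝ) + 1 := by push_cast; ring
    rw [hd1R]
    have h1 : (0:ℝ) < (e:ℝ) + 1 := by positivity
    have h2 : (0:ℝ) < (k:ℝ) - ((e:ℝ)+1) := by linarith
    have h3 : (0:ℝ) < E - 1 := by linarith
    have h4 : (0:ℝ) < (k:ℝ) - 1 := by linarith
    have h5 : c1 * E + c1 * ((k:ℝ) - ((e:ℝ)+1)) / ((e:ℝ)+1) ≠ 0 := by positivity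
    field_simp
    ring
  have hApos : 0 < Aconst k (e+1) ε := by
    rw [Aconst]
    have hd1R : ((e+1 : ℕ) : ℝ) = (e:ℝ) + 1 := by push_cast; ring
    rw [hd1R]
    have h2 : (0:ℝ) < (k:ℝ) - ((e:ℝ)+1) := by linarith
    have h3 : (0:ℝ) < E - 1 := by linarith
    have h4 : (0:ℝ) < (k:ℝ) - 1 := by linarith
    have h1 : (0:ℝ) < (e:ℝ) + 1 := by positivity
    positivity
  refine ⟨?_, hAB⟩
  -- Part 1: unbiasedness
  have hprod1 : ∑ y : Fin n → Out k (e+1), ∏ j, margP k ε (e+1) p (y j) = 1 := by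
    rw [← Fintype.prod_sum (fun (_ : Fin n) (z : Out k (e+1)) => margP k ε (e+1) p z)]
    simp_rw [hm1]
    simp
  have htc : ∑ y : Fin n → Out k (e+1),
      (∏ j, margP k ε (e+1) p (y j)) * ((tcount i y : ℕ) : ℝ) = (n:ℝ) * mi := by
    have hcast : ∀ y : Fin n → Out k (e+1),
        ((tcount i y : ℕ) : ℝ) = ∑ j, (if i ∈ (y j).1 then (1:ℝ) else 0) := by
      intro y
      rw [tcount, Finset.card_filter]
      push_cast
      rfl
    simp_rw [hcast, Finset.mul_sum]
    rw [Finset.sum_comm]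
    have hfix : ∀ j : Fin n,
        ∑ y : Fin n → Out k (e+1), (∏ j', margP k ε (e+1) p (y j')) * (if i ∈ (y j).1 then (1:ℝ) else 0) = mi := by
      intro j
      have hresh : ∀ y : Fin n → Out k (e+1),
          (∏ j', margP k ε (e+1) p (y j')) * (if i ∈ (y j).1 then (1:ℝ) else 0)
          = ∏ j', (fun (j' : Fin n) (z : Out k (e+1)) =>
              if j' = j then margP k ε (e+1) p z * (if i ∈ z.1 then (1:ℝ) else 0)
              else margP k ε (e+1) p z) j' (y j') := by
        intro y
        have hsplit : ∀ j' : Fin n, (fun (j' : Fin n) (z : Out k (e+1)) =>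
              if j' = j then margP k ε (e+1) p z * (if i ∈ z.1 then (1:ℝ) else 0)
              else margP k ε (e+1) p z) j' (y j')
            = margP k ε (e+1) p (y j') * (if j' = j then (if i ∈ (y j').1 then (1:ℝ) else 0) else 1) := by
          intro j'
          by_cases h : j' = j <;> simp [h]
        rw [Finset.prod_congr rfl (fun j' _ => hsplit j'), Finset.prod_mul_distrib,
          Finset.prod_ite_eq' Finset.univ j (fun j' => (if i ∈ (y j').1 then (1:ℝ) else 0))]
        simp
      simp_rw [hresh]
      rw [← Fintype.prod_sum (fun (j' : Fin n) (z : Out k (e+1)) =>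
          if j' = j then margP k ε (e+1) p z * (if i ∈ z.1 then (1:ℝ) else 0)
          else margP k ε (e+1) p z)]
      have hcol : ∀ j' : Fin n,
          (∑ z : Out k (e+1), if j' = j then margP k ε (e+1) p z * (if i ∈ z.1 then (1:ℝ) else 0)
            else margP k ε (e+1) p z) = if j' = j then mi else 1 := by
        intro j'
        split_ifs with h
        · rw [hmidef, Finset.sum_filter]
          exact Finset.sum_congr rfl fun z _ => by split_ifs <;> ring
        · exact hm1
      simp_rw [hcol]
      simp
    simp_rw [hfix]
    simp [Finset.card_univ]
  have hnR : (0:ℝ) < (n:ℝ) := by exact_mod_cast hn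
  calc ∑ y : Fin n → Out k (e+1), (∏ j, margP k ε (e+1) p (y j)) * empEst k (e+1) n ε y i
      = ∑ y : Fin n → Out k (e+1),
          ((Aconst k (e+1) ε / n) * ((∏ j, margP k ε (e+1) p (y j)) * ((tcount i y : ℕ) : ℝ))
            - Bconst k (e+1) ε * ∏ j, margP k ε (e+1) p (y j)) := by
        refine Finset.sum_congr rfl fun y _ => ?_
        rw [empEst]
        ring
    _ = (Aconst k (e+1) ε / n) * ((n:ℝ) * mi) - Bconst k (e+1) ε * 1 := by
        rw [Finset.sum_sub_distrib, ← Finset.mul_sum, ← Finset.mul_sum, htc, hprod1]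
    _ = p i := by
        rw [hAB]
        field_simp
        ring
end

section
/- Let k ≥ 2, ε > 0, 1 ≤ d ≤ k−1, n ≥ 1 and p ∈ Δ_k. If Y^n consists of n i.i.d. samples with distribution m = p Q_{k,ε,d}, then for every i ∈ {1,…,k} the variance of the empirical estimator is Var(p̂_i(Y^n)) = (1/n)(p_i + B)(A − p_i − B). -/
open MeasureTheory ProbabilityTheory Filter Real
open scoped ENNReal NNReal

noncomputable section

-- auxiliary lemmas
section Aux

open Finset in
theorem count_supset {α : Type*} [DecidableEq α] (s t : Finset α) (ht : t ⊆ s) (d : ℕ) (htd : t.card ≤ d) :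
    ((s.powersetCard d).filter (fun S => t ⊆ S)).card = (s.card - t.card).choose (d - t.card) := by
  classical
  rw [← Finset.card_sdiff_of_subset ht, ← Finset.card_powersetCard (d - t.card) (s \ t)]
  apply Finset.card_bij' (fun S _ => S \ t) (fun U _ => U ∪ t)
  · intro S hS
    simp only [mem_filter, mem_powersetCard] at hS
    obtain ⟨⟨hSs, hSc⟩, htS⟩ := hS
    rw [mem_powersetCard]
    constructor
    · exact sdiff_subset_sdiff hSs Subset.rfl
    · rw [card_sdiff_of_subset htS, hSc]
  · intro U hU
    rw [mem_powersetCard] at hU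
    obtain ⟨hUs, hUc⟩ := hU
    have hdisj : Disjoint U t := (Finset.sdiff_disjoint.mono_left hUs)
    simp only [mem_filter, mem_powersetCard]
    refine ⟨⟨?_, ?_⟩, subset_union_right⟩
    · exact union_subset (hUs.trans sdiff_subset) ht
    · rw [card_union_of_disjoint hdisj, hUc]
      omega
  · intro S hS
    simp only [mem_filter, mem_powersetCard] at hS
    exact sdiff_union_of_subset hS.2
  · intro U hU
    rw [mem_powersetCard] at hU
    exact union_sdiff_cancel_right (Finset.sdiff_disjoint.mono_left hU.1)


theorem sum_prod_pi {Y : Type*} [Fintype Y] (n : ℕ) (h : Fin n → Y → ℝ) :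
    ∑ y : Fin n → Y, ∏ j, h j (y j) = ∏ j, ∑ x, h j x := by
  classical
  rw [Finset.prod_univ_sum, Fintype.piFinset_univ]

theorem corr {Y : Type*} [Fintype Y] [DecidableEq Y] (n : ℕ) (q f : Y → ℝ)
    (hq : ∑ x, q x = 1) (j₀ j₁ : Fin n) :
    ∑ y : Fin n → Y, (∏ j, q (y j)) * (f (y j₀) * f (y j₁)) =
      if j₀ = j₁ then ∑ x, q x * (f x * f x)
      else (∑ x, q x * f x) * (∑ x, q x * f x) := by
  classical
  have key : ∑ y : Fin n → Y, (∏ j, q (y j)) * (f (y j₀) * f (y j₁)) =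
      ∏ j : Fin n, ∑ x, q x * ((if j = j₀ then f x else 1) * (if j = j₁ then f x else 1)) := by
    rw [← sum_prod_pi n (fun j x => q x * ((if j = j₀ then f x else 1) * (if j = j₁ then f x else 1)))]
    apply Finset.sum_congr rfl
    intro y _
    rw [Finset.prod_mul_distrib, Finset.prod_mul_distrib,
      Finset.prod_ite_eq' Finset.univ j₀ (fun j => f (y j)),
      Finset.prod_ite_eq' Finset.univ j₁ (fun j => f (y j))]
    simp
  rw [key]
  by_cases hjj : j₀ = j₁
  · subst hjj
    simp only [if_pos rfl]
    have : ∀ j : Fin n, (∑ x, q x * ((if j = j₀ then f x else 1) * (if j = j₀ then f x else 1)))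
        = if j = j₀ then ∑ x, q x * (f x * f x) else 1 := by
      intro j
      by_cases hj : j = j₀ <;> simp [hj, hq]
    rw [Finset.prod_congr rfl (fun j _ => this j), Finset.prod_ite_eq' Finset.univ j₀
      (fun _ => ∑ x, q x * (f x * f x))]
    simp
  · rw [if_neg hjj]
    have : ∀ j : Fin n, (∑ x, q x * ((if j = j₀ then f x else 1) * (if j = j₁ then f x else 1)))
        = (if j = j₀ then ∑ x, q x * f x else 1) * (if j = j₁ then ∑ x, q x * f x else 1) := by
      intro j
      by_cases h0 : j = j₀ <;> by_cases h1 : j = j₁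
      · exact absurd (h0 ▸ h1) hjj
      · simp [h0, h1, hjj]
      · simp [h0, h1, Ne.symm hjj]
      · simp [h0, h1, hq]
    rw [Finset.prod_congr rfl (fun j _ => this j), Finset.prod_mul_distrib,
      Finset.prod_ite_eq' Finset.univ j₀ (fun _ => ∑ x, q x * f x),
      Finset.prod_ite_eq' Finset.univ j₁ (fun _ => ∑ x, q x * f x)]
    simp

theorem mom1 {Y : Type*} [Fintype Y] [DecidableEq Y] (n : ℕ) (q f : Y → ℝ)
    (hq : ∑ x, q x = 1) (j₀ : Fin n) :
    ∑ y : Fin n → Y, (∏ j, q (y j)) * f (y j₀) = ∑ x, q x * f x := by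
  classical
  have key : ∑ y : Fin n → Y, (∏ j, q (y j)) * f (y j₀) =
      ∏ j : Fin n, ∑ x, q x * (if j = j₀ then f x else 1) := by
    rw [← sum_prod_pi n (fun j x => q x * (if j = j₀ then f x else 1))]
    apply Finset.sum_congr rfl
    intro y _
    rw [Finset.prod_mul_distrib, Finset.prod_ite_eq' Finset.univ j₀ (fun j => f (y j))]
    simp
  rw [key]
  have : ∀ j : Fin n, (∑ x, q x * (if j = j₀ then f x else 1))
      = if j = j₀ then ∑ x, q x * f x else 1 := by
    intro j; by_cases hj : j = j₀ <;> simp [hj, hq]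
  rw [Finset.prod_congr rfl (fun j _ => this j),
    Finset.prod_ite_eq' Finset.univ j₀ (fun _ => ∑ x, q x * f x)]
  simp

theorem mom0 {Y : Type*} [Fintype Y] (n : ℕ) (q : Y → ℝ) (hq : ∑ x, q x = 1) :
    ∑ y : Fin n → Y, (∏ j, q (y j)) = 1 := by
  rw [sum_prod_pi n (fun _ x => q x)]
  simp [hq]

theorem genvar {Y : Type*} [Fintype Y] [DecidableEq Y] (n : ℕ) (hn : 1 ≤ n)
    (q f : Y → ℝ) (hq : ∑ x, q x = 1) (hf : ∀ x, f x * f x = f x) (A B : ℝ) :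
    ∑ y : Fin n → Y, (∏ j, q (y j)) *
        ((A * ((∑ j, f (y j)) / n) - B) -
          ∑ z : Fin n → Y, (∏ j, q (z j)) * (A * ((∑ j, f (z j)) / n) - B))^2 =
      (1/(n:ℝ)) * (A * (∑ x, q x * f x)) * (A - A * (∑ x, q x * f x)) := by
  classical
  set μ : ℝ := ∑ x, q x * f x with hμ
  have hn0 : (n:ℝ) ≠ 0 := Nat.cast_ne_zero.mpr (by omega)
  have hS1 : ∑ y : Fin n → Y, (∏ j, q (y j)) * (∑ j, f (y j)) = n * μ := by
    have : ∀ y : Fin n → Y, (∏ j, q (y j)) * (∑ j, f (y j))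
        = ∑ j₀ : Fin n, (∏ j, q (y j)) * f (y j₀) := by
      intro y; rw [Finset.mul_sum]
    rw [Finset.sum_congr rfl (fun y _ => this y), Finset.sum_comm]
    rw [Finset.sum_congr rfl (fun j₀ _ => mom1 n q f hq j₀)]
    simp [mul_comm]
    exact Or.inl rfl
  have hS2 : ∑ y : Fin n → Y, (∏ j, q (y j)) * ((∑ j, f (y j)) * (∑ j, f (y j)))
      = n * μ + ((n:ℝ)^2 - n) * (μ * μ) := by
    have step1 : ∀ y : Fin n → Y, (∏ j, q (y j)) * ((∑ j, f (y j)) * (∑ j, f (y j)))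
        = ∑ j₀ : Fin n, ∑ j₁ : Fin n, (∏ j, q (y j)) * (f (y j₀) * f (y j₁)) := by
      intro y
      rw [Finset.sum_mul_sum, Finset.mul_sum]
      exact Finset.sum_congr rfl fun j₀ _ => by rw [Finset.mul_sum]
    rw [Finset.sum_congr rfl (fun y _ => step1 y), Finset.sum_comm]
    have step2 : ∀ j₀ : Fin n, ∑ y : Fin n → Y, ∑ j₁ : Fin n,
        (∏ j, q (y j)) * (f (y j₀) * f (y j₁)) = μ + ((n:ℝ) - 1) * (μ * μ) := by
      intro j₀
      rw [Finset.sum_comm]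
      have : ∀ j₁ : Fin n, ∑ y : Fin n → Y, (∏ j, q (y j)) * (f (y j₀) * f (y j₁))
          = (μ * μ) + if j₀ = j₁ then μ - μ * μ else 0 := by
        intro j₁
        rw [corr n q f hq j₀ j₁]
        by_cases hjj : j₀ = j₁
        · have : ∑ x, q x * (f x * f x) = μ := by
            rw [hμ]; exact Finset.sum_congr rfl fun x _ => by rw [hf x]
          simp [hjj, this]
        · simp [hjj]
          rfl
      rw [Finset.sum_congr rfl (fun j₁ _ => this j₁), Finset.sum_add_distrib,
        Finset.sum_const, Finset.sum_ite_eq]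
      simp
      ring
    rw [Finset.sum_congr rfl (fun j₀ _ => step2 j₀), Finset.sum_const]
    simp
    ring
  have hE1 : ∑ z : Fin n → Y, (∏ j, q (z j)) * (A * ((∑ j, f (z j)) / n) - B)
      = A * μ - B := by
    have : ∀ z : Fin n → Y, (∏ j, q (z j)) * (A * ((∑ j, f (z j)) / n) - B)
        = (A / n) * ((∏ j, q (z j)) * (∑ j, f (z j))) - B * (∏ j, q (z j)) := by
      intro z; ring
    rw [Finset.sum_congr rfl (fun z _ => this z), Finset.sum_sub_distrib,
      ← Finset.mul_sum, ← Finset.mul_sum, hS1, mom0 n q hq]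
    field_simp
  rw [hE1]
  have expand : ∀ y : Fin n → Y, (∏ j, q (y j)) *
      ((A * ((∑ j, f (y j)) / n) - B) - (A * μ - B))^2
      = (A^2/(n:ℝ)^2) * ((∏ j, q (y j)) * ((∑ j, f (y j)) * (∑ j, f (y j))))
        - (2*A^2*μ/n) * ((∏ j, q (y j)) * (∑ j, f (y j)))
        + (A^2*μ*μ) * (∏ j, q (y j)) := by
    intro y
    field_simp
    ring
  rw [Finset.sum_congr rfl (fun y _ => expand y), Finset.sum_add_distrib,
    Finset.sum_sub_distrib, ← Finset.mul_sum, ← Finset.mul_sum, ← Finset.mul_sum,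
    hS1, hS2, mom0 n q hq]
  field_simp
  ring

end Aux
-- ==== combinatorial lemmas ====

/-- number of d-subsets containing two fixed distinct points -/
def N2 (k d : ℕ) : ℕ := if 2 ≤ d then (k-2).choose (d-2) else 0

theorem sum_out {k d : ℕ} (F : Finset (Fin k) → ℝ) :
    ∑ y : Out k d, F y.1 = ∑ S ∈ (Finset.univ : Finset (Fin k)).powersetCard d, F S :=
  (Finset.sum_subtype _ (fun _ => Finset.mem_powersetCard_univ) F).symm

theorem count1 {k d : ℕ} (hd1 : 1 ≤ d) (i : Fin k) :
    (((Finset.univ : Finset (Fin k)).powersetCard d).filter (fun S => i ∈ S)).card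
      = (k-1).choose (d-1) := by
  have h := count_supset (Finset.univ : Finset (Fin k)) {i} (by simp) d (by simpa using hd1)
  simp only [Finset.card_singleton, Finset.card_univ, Fintype.card_fin] at h
  rw [← h]
  congr 1
  apply Finset.filter_congr
  intro S _
  simp [Finset.singleton_subset_iff]

theorem count2 {k d : ℕ} (hd1 : 1 ≤ d) (i v : Fin k) (hvi : v ≠ i) :
    (((Finset.univ : Finset (Fin k)).powersetCard d).filter (fun S => i ∈ S ∧ v ∈ S)).card
      = N2 k d := by
  by_cases hd2 : 2 ≤ d
  · have h := count_supset (Finset.univ : Finset (Fin k)) {i, v} (by simp) d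
      (by rw [Finset.card_insert_of_notMem (by simp [hvi.symm]), Finset.card_singleton]; omega)
    rw [Finset.card_insert_of_notMem (by simp [hvi.symm]), Finset.card_singleton,
      Finset.card_univ, Fintype.card_fin] at h
    rw [N2, if_pos hd2, ← h]
    congr 1
    apply Finset.filter_congr
    intro S _
    simp [Finset.insert_subset_iff, Finset.singleton_subset_iff, and_comm]
  · have hd : d = 1 := by omega
    rw [N2, if_neg hd2, Finset.card_eq_zero, Finset.filter_eq_empty_iff]
    intro S hS
    rw [Finset.mem_powersetCard] at hS
    rintro ⟨hi, hv⟩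
    exact hvi (Finset.card_le_one.mp (by omega) v hv i hi)

theorem key_sum {k d : ℕ} (hk : 2 ≤ k) (hd1 : 1 ≤ d) (hdk : d ≤ k - 1) (i : Fin k) (a b : ℝ) :
    ∑ S ∈ (Finset.univ : Finset (Fin k)).powersetCard d, (if i ∈ S then a else b)
      = ((k-1).choose (d-1) : ℝ) * a + ((k-1).choose d : ℝ) * b := by
  classical
  have htot : ((Finset.univ : Finset (Fin k)).powersetCard d).card = k.choose d := by
    rw [Finset.card_powersetCard, Finset.card_univ, Fintype.card_fin]
  have pascal : k.choose d = (k-1).choose (d-1) + (k-1).choose d := by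
    have h := Nat.choose_succ_succ' (k-1) (d-1)
    have h1 : k - 1 + 1 = k := by omega
    have h2 : d - 1 + 1 = d := by omega
    rw [h1, h2] at h
    exact h
  have hsplit : (((Finset.univ : Finset (Fin k)).powersetCard d).filter (fun x => i ∈ x)).card
      + (((Finset.univ : Finset (Fin k)).powersetCard d).filter (fun x => ¬ i ∈ x)).card
      = ((Finset.univ : Finset (Fin k)).powersetCard d).card :=
    Finset.card_filter_add_card_filter_not (p := fun x => i ∈ x)
  have hpos : (((Finset.univ : Finset (Fin k)).powersetCard d).filter (fun x => i ∈ x)).card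
      = (k-1).choose (d-1) := count1 hd1 i
  have hneg : (((Finset.univ : Finset (Fin k)).powersetCard d).filter (fun x => ¬ i ∈ x)).card
      = (k-1).choose d := by omega
  rw [Finset.sum_ite, Finset.sum_const, Finset.sum_const, hpos, hneg,
    nsmul_eq_mul, nsmul_eq_mul]

theorem key_pair {k d : ℕ} (hk : 2 ≤ k) (hd1 : 1 ≤ d) (hdk : d ≤ k - 1)
    (i v : Fin k) (hvi : v ≠ i) (a b : ℝ) :
    ∑ S ∈ (Finset.univ : Finset (Fin k)).powersetCard d,
        (if i ∈ S then (if v ∈ S then a else b) else 0)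
      = (N2 k d : ℝ) * a + (((k-1).choose (d-1) : ℝ) - (N2 k d : ℝ)) * b := by
  classical
  have hff : ((((Finset.univ : Finset (Fin k)).powersetCard d).filter (fun x => i ∈ x)).filter
      (fun x => v ∈ x)).card = N2 k d := by
    rw [Finset.filter_filter]
    exact count2 hd1 i v hvi
  have hsplit : ((((Finset.univ : Finset (Fin k)).powersetCard d).filter (fun x => i ∈ x)).filter
        (fun x => v ∈ x)).card
      + ((((Finset.univ : Finset (Fin k)).powersetCard d).filter (fun x => i ∈ x)).filter
        (fun x => ¬ v ∈ x)).card
      = (((Finset.univ : Finset (Fin k)).powersetCard d).filter (fun x => i ∈ x)).card :=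
    Finset.card_filter_add_card_filter_not (p := fun x => v ∈ x)
  have hpos : (((Finset.univ : Finset (Fin k)).powersetCard d).filter (fun x => i ∈ x)).card
      = (k-1).choose (d-1) := count1 hd1 i
  have hle : N2 k d ≤ (k-1).choose (d-1) := by omega
  have hneg : ((((Finset.univ : Finset (Fin k)).powersetCard d).filter (fun x => i ∈ x)).filter
      (fun x => ¬ v ∈ x)).card = (k-1).choose (d-1) - N2 k d := by omega
  rw [Finset.sum_ite, Finset.sum_const_zero, add_zero, Finset.sum_ite,
    Finset.sum_const, Finset.sum_const, hff, hneg, nsmul_eq_mul, nsmul_eq_mul,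
    Nat.cast_sub hle]

theorem scheme_sum {k d : ℕ} (hk : 2 ≤ k) (hd1 : 1 ≤ d) (hdk : d ≤ k - 1)
    (ε : ℝ) (v : Fin k) :
    ∑ y : Out k d, schemeP k ε d v y = 1 := by
  classical
  have hc1pos : 0 < (k-1).choose (d-1) := Nat.choose_pos (by omega)
  have hZr : (0:ℝ) < ((k-1).choose (d-1) : ℝ) * Real.exp ε + ((k-1).choose d : ℝ) := by
    have h1 : (0:ℝ) < ((k-1).choose (d-1) : ℝ) * Real.exp ε :=
      mul_pos (by exact_mod_cast hc1pos) (Real.exp_pos ε)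
    have h2 : (0:ℝ) ≤ ((k-1).choose d : ℝ) := Nat.cast_nonneg _
    linarith
  have hpt : ∀ y : Out k d, schemeP k ε d v y
      = (fun S : Finset (Fin k) => (if v ∈ S then Real.exp ε else 1) /
          (((k-1).choose (d-1) : ℝ) * Real.exp ε + ((k-1).choose d : ℝ))) y.1 :=
    fun y => rfl
  rw [(Finset.sum_congr rfl (fun y _ => hpt y)).trans (sum_out
    (fun S : Finset (Fin k) => (if v ∈ S then Real.exp ε else 1) /
      (((k-1).choose (d-1) : ℝ) * Real.exp ε + ((k-1).choose d : ℝ)))),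
    ← Finset.sum_div, key_sum hk hd1 hdk v (Real.exp ε) 1, mul_one]
  exact div_self (ne_of_gt hZr)

theorem mu_val {k d : ℕ} (hk : 2 ≤ k) (hd1 : 1 ≤ d) (hdk : d ≤ k - 1)
    (ε : ℝ) (p : Fin k → ℝ) (hp1 : ∑ v, p v = 1) (i : Fin k) :
    ∑ y : Out k d, margP k ε d p y * (if i ∈ y.1 then (1:ℝ) else 0)
      = (p i * (((k-1).choose (d-1) : ℝ) * Real.exp ε)
          + (1 - p i) * ((N2 k d : ℝ) * Real.exp ε
              + (((k-1).choose (d-1) : ℝ) - (N2 k d : ℝ))))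
        / (((k-1).choose (d-1) : ℝ) * Real.exp ε + ((k-1).choose d : ℝ)) := by
  classical
  set E := Real.exp ε with hE
  set Zr : ℝ := ((k-1).choose (d-1) : ℝ) * E + ((k-1).choose d : ℝ) with hZrdef
  have expand : ∀ y : Out k d, margP k ε d p y * (if i ∈ y.1 then (1:ℝ) else 0)
      = ∑ v : Fin k, p v * (schemeP k ε d v y * (if i ∈ y.1 then (1:ℝ) else 0)) := by
    intro y
    rw [margP, Finset.sum_mul]
    exact Finset.sum_congr rfl fun v _ => by ring
  rw [Finset.sum_congr rfl (fun y _ => expand y), Finset.sum_comm]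
  have pull : ∀ v : Fin k, ∑ y : Out k d, p v * (schemeP k ε d v y * (if i ∈ y.1 then (1:ℝ) else 0))
      = p v * ∑ y : Out k d, schemeP k ε d v y * (if i ∈ y.1 then (1:ℝ) else 0) :=
    fun v => (Finset.mul_sum _ _ _).symm
  rw [Finset.sum_congr rfl (fun v _ => pull v)]
  have hri : ∑ y : Out k d, schemeP k ε d i y * (if i ∈ y.1 then (1:ℝ) else 0)
      = (((k-1).choose (d-1) : ℝ) * E) / Zr := by
    have hpt : ∀ y : Out k d, schemeP k ε d i y * (if i ∈ y.1 then (1:ℝ) else 0)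
        = (fun S : Finset (Fin k) => if i ∈ S then E / Zr else 0) y.1 := by
      intro y
      simp only [schemeP, ← hE, ← hZrdef]
      by_cases h : i ∈ y.1 <;> simp [h]
    rw [(Finset.sum_congr rfl (fun y _ => hpt y)).trans (sum_out
      (fun S : Finset (Fin k) => if i ∈ S then E / Zr else 0)),
      key_sum hk hd1 hdk i (E/Zr) 0]
    ring
  have hrne : ∀ v : Fin k, v ≠ i →
      ∑ y : Out k d, schemeP k ε d v y * (if i ∈ y.1 then (1:ℝ) else 0)
      = ((N2 k d : ℝ) * E + (((k-1).choose (d-1) : ℝ) - (N2 k d : ℝ))) / Zr := by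
    intro v hv
    have hpt : ∀ y : Out k d, schemeP k ε d v y * (if i ∈ y.1 then (1:ℝ) else 0)
        = (fun S : Finset (Fin k) => if i ∈ S then (if v ∈ S then E / Zr else 1 / Zr) else 0) y.1 := by
      intro y
      simp only [schemeP, ← hE, ← hZrdef]
      by_cases h1 : i ∈ y.1 <;> by_cases h2 : v ∈ y.1 <;> simp [h1, h2]
    rw [(Finset.sum_congr rfl (fun y _ => hpt y)).trans (sum_out
      (fun S : Finset (Fin k) => if i ∈ S then (if v ∈ S then E / Zr else 1 / Zr) else 0)),
      key_pair hk hd1 hdk i v hv (E/Zr) (1/Zr)]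
    ring
  rw [← Finset.add_sum_erase _ _ (Finset.mem_univ i), hri]
  have hconst : ∀ v ∈ Finset.univ.erase i,
      p v * (∑ y : Out k d, schemeP k ε d v y * (if i ∈ y.1 then (1:ℝ) else 0))
      = p v * (((N2 k d : ℝ) * E + (((k-1).choose (d-1) : ℝ) - (N2 k d : ℝ))) / Zr) :=
    fun v hv => by rw [hrne v (Finset.ne_of_mem_erase hv)]
  rw [Finset.sum_congr rfl hconst, ← Finset.sum_mul]
  have hsum_erase : ∑ v ∈ Finset.univ.erase i, p v = 1 - p i := by
    have h := Finset.add_sum_erase Finset.univ p (Finset.mem_univ i)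
    rw [hp1] at h
    linarith
  rw [hsum_erase]
  ring

theorem Amu_eq {k d : ℕ} (hk : 2 ≤ k) (hd1 : 1 ≤ d) (hdk : d ≤ k - 1)
    (ε : ℝ) (hε : 0 < ε) (x : ℝ) :
    Aconst k d ε *
        ((x * (((k-1).choose (d-1) : ℝ) * Real.exp ε)
          + (1 - x) * ((N2 k d : ℝ) * Real.exp ε
              + (((k-1).choose (d-1) : ℝ) - (N2 k d : ℝ))))
        / (((k-1).choose (d-1) : ℝ) * Real.exp ε + ((k-1).choose d : ℝ)))
      - Bconst k d ε = x := by
  have hcast1 : ((k-1:ℕ):ℝ) = (k:ℝ) - 1 := by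
    rw [Nat.cast_sub (by omega : 1 ≤ k), Nat.cast_one]
  have hcastd1 : ((d-1:ℕ):ℝ) = (d:ℝ) - 1 := by
    rw [Nat.cast_sub hd1, Nat.cast_one]
  have hcastkd : ((k-d:ℕ):ℝ) = (k:ℝ) - (d:ℝ) := by
    rw [Nat.cast_sub (by omega : d ≤ k)]
  have hnat1 : (k-1) * N2 k d = (d-1) * ((k-1).choose (d-1)) := by
    by_cases hd2 : 2 ≤ d
    · rw [N2, if_pos hd2]
      have h := Nat.add_one_mul_choose_eq (k-2) (d-2)
      have e1 : k-2+1 = k-1 := by omega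
      have e2 : d-2+1 = d-1 := by omega
      rw [e1, e2] at h
      rw [h, Nat.mul_comm]
    · rw [N2, if_neg hd2]
      have : d - 1 = 0 := by omega
      rw [this]
      simp
  have hnat2 : (k - d) * ((k-1).choose (d-1)) = d * ((k-1).choose d) := by
    have h := Nat.choose_succ_right_eq (k-1) (d-1)
    have e2 : d-1+1 = d := by omega
    have e3 : k-1-(d-1) = k - d := by omega
    rw [e2, e3] at h
    rw [Nat.mul_comm, ← h, Nat.mul_comm]
  have hid1 : ((k:ℝ)-1) * (N2 k d : ℝ) = ((d:ℝ)-1) * (((k-1).choose (d-1) : ℝ)) := by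
    rw [← hcast1, ← hcastd1]
    exact_mod_cast hnat1
  have hid2 : ((k:ℝ)-(d:ℝ)) * (((k-1).choose (d-1) : ℝ)) = (d:ℝ) * (((k-1).choose d : ℝ)) := by
    rw [← hcastkd]
    exact_mod_cast hnat2
  have hDpos : (0:ℝ) < (d:ℝ) := by exact_mod_cast hd1
  have hK1 : (0:ℝ) < (k:ℝ) - 1 := by
    have : (1:ℝ) < (k:ℝ) := by exact_mod_cast (by omega : 1 < k)
    linarith
  have hKD : (0:ℝ) < (k:ℝ) - (d:ℝ) := by
    have : (d:ℝ) < (k:ℝ) := by exact_mod_cast (by omega : d < k)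
    linarith
  have hEgt : (1:ℝ) < Real.exp ε := by
    have := Real.exp_lt_exp.mpr hε
    simpa [Real.exp_zero] using this
  have hE1 : (0:ℝ) < Real.exp ε - 1 := by linarith
  have hc1pos : (0:ℝ) < (((k-1).choose (d-1) : ℕ) : ℝ) := by
    exact_mod_cast Nat.choose_pos (show d-1 ≤ k-1 by omega)
  have hC2 : (N2 k d : ℝ) = ((d:ℝ)-1) * (((k-1).choose (d-1) : ℝ)) / ((k:ℝ)-1) := by
    rw [eq_div_iff (ne_of_gt hK1)]
    linarith [hid1]
  have hCD : (((k-1).choose d : ℕ) : ℝ)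
      = ((k:ℝ)-(d:ℝ)) * (((k-1).choose (d-1) : ℝ)) / (d:ℝ) := by
    rw [eq_div_iff (ne_of_gt hDpos)]
    linarith [hid2]
  rw [Aconst, Bconst, hC2, hCD]
  have hZr : (((k-1).choose (d-1) : ℝ)) * Real.exp ε
      + ((k:ℝ)-(d:ℝ)) * (((k-1).choose (d-1) : ℝ)) / (d:ℝ) ≠ 0 := by
    have h1 : (0:ℝ) < (((k-1).choose (d-1) : ℝ)) * Real.exp ε :=
      mul_pos hc1pos (Real.exp_pos ε)
    have h2 : (0:ℝ) < ((k:ℝ)-(d:ℝ)) * (((k-1).choose (d-1) : ℝ)) / (d:ℝ) :=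
      div_pos (mul_pos hKD hc1pos) hDpos
    positivity
  field_simp
  ring

theorem final_alg (A B x V w : ℝ) (h : A * V - B = x) :
    w * (A * V) * (A - A * V) = w * (x + B) * (A - x - B) := by
  have h2 : A * V = x + B := by linarith
  rw [h2]
  ring

end
theorem statement13 (k : ℕ) (hk : 2 ≤ k) (ε : ℝ) (hε : 0 < ε) (d n : ℕ)
    (hd1 : 1 ≤ d) (hdk : d ≤ k - 1) (hn : 1 ≤ n)
    (p : Fin k → ℝ) (hp : p ∈ simplex k) (i : Fin k) :
    ∑ y : Fin n → Out k d, (∏ j, margP k ε d p (y j)) *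
        (empEst k d n ε y i -
          ∑ z : Fin n → Out k d, (∏ j, margP k ε d p (z j)) * empEst k d n ε z i)^2 =
      (1/(n:ℝ)) * (p i + Bconst k d ε) * (Aconst k d ε - p i - Bconst k d ε) := by
  classical
  obtain ⟨hp0, hp1⟩ := hp
  have hq1 : ∑ y : Out k d, margP k ε d p y = 1 := by
    have hm : ∀ y : Out k d, margP k ε d p y = ∑ v, p v * schemeP k ε d v y := fun y => rfl
    rw [Finset.sum_congr rfl (fun y _ => hm y), Finset.sum_comm]
    have h2 : ∀ v : Fin k, ∑ y : Out k d, p v * schemeP k ε d v y = p v := by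
      intro v
      rw [← Finset.mul_sum, scheme_sum hk hd1 hdk ε v, mul_one]
    rw [Finset.sum_congr rfl (fun v _ => h2 v), hp1]
  have hff : ∀ y : Out k d, (if i ∈ y.1 then (1:ℝ) else 0) * (if i ∈ y.1 then (1:ℝ) else 0)
      = (if i ∈ y.1 then (1:ℝ) else 0) := by
    intro y
    split <;> norm_num
  have hemp : ∀ (y : Fin n → Out k d), empEst k d n ε y i
      = Aconst k d ε * ((∑ j, (if i ∈ (y j).1 then (1:ℝ) else 0)) / n) - Bconst k d ε := by
    intro y
    have ht : ((tcount i y : ℕ) : ℝ) = ∑ j, (if i ∈ (y j).1 then (1:ℝ) else 0) := by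
      rw [tcount, Finset.card_filter]
      push_cast
      rfl
    simp only [empEst]
    rw [ht]
  have key := genvar (Y := Out k d) n hn (fun y => margP k ε d p y)
      (fun y => if i ∈ y.1 then (1:ℝ) else 0) hq1 hff (Aconst k d ε) (Bconst k d ε)
  have hmu := mu_val hk hd1 hdk ε p hp1 i
  have hA := Amu_eq hk hd1 hdk ε hε (p i)
  simp only [hemp]
  refine key.trans ?_
  simp only [hmu]
  exact final_alg _ _ _ _ _ hA
end

section
/- Let k ≥ 2, ε > 0 and u > 0, and let Q ∈ D_{ε,E} have output alphabet {1,…,L}, so that Σ_{j=1}^L q_{jv} = 1 for every v ∈ {1,…,k}. Then, with the convention that a nonpositive quantity raised to the power −u/2 is +∞, Σ_{i=1}^k ((k^2/(k−1)^2)(Σ_{j=1}^L q_{ji}^2/q_j − 1))^{−u/2} ≥ k M(k,ε)^{u/2}. -/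
open MeasureTheory ProbabilityTheory Filter Real
open scoped ENNReal NNReal

-- ===================== auxiliary lemmas =====================

/-- Row structure: every row of a `memDEE` scheme takes only values `m` and `e^ε m` with `m > 0`. -/
lemma rowStruct {k L : ℕ} (hk : 2 ≤ k) {ε : ℝ} (hε : 0 < ε) {q : Fin L → Fin k → ℝ}
    (hq : memDEE k L ε q) (j : Fin L) :
    ∃ m : ℝ, 0 < m ∧ ∀ v, q j v = m ∨ q j v = Real.exp ε * m := by
  haveI : NeZero k := ⟨by omega⟩
  obtain ⟨hq0, hq1, hqr, hqs⟩ := hq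
  set m : ℝ := ⨅ v, q j v with hm
  have hm0 : 0 ≤ m := le_ciInf fun v => hq0 j v
  have hmne : m ≠ 0 := by
    intro h
    have := hqs j 0
    rw [← hm, h, div_zero] at this
    rcases this with h1 | h2
    · exact one_ne_zero h1.symm
    · exact (Real.exp_pos ε).ne' h2.symm
  have hmpos : 0 < m := lt_of_le_of_ne hm0 (Ne.symm hmne)
  refine ⟨m, hmpos, fun v => ?_⟩
  have := hqs j v
  rw [← hm] at this
  simp only [Set.mem_insert_iff, Set.mem_singleton_iff] at this
  rcases this with h1 | h2
  · left
    have := (div_eq_iff hmne).1 h1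
    rwa [one_mul] at this
  · right
    exact (div_eq_iff hmne).1 h2

/-- Row sums for a two-valued row. -/
lemma rowSums {k : ℕ} (a m : ℝ) (ha : 1 < a) (hm : 0 < m) (f : Fin k → ℝ)
    (hf : ∀ v, f v = m ∨ f v = a * m) :
    (∑ v, f v = m * ((a - 1) * ((Finset.univ.filter fun v => f v = a * m).card : ℝ) + k)) ∧
    (∑ v, (f v)^2 =
      m^2 * ((a^2 - 1) * ((Finset.univ.filter fun v => f v = a * m).card : ℝ) + k)) := by
  classical
  set s := (Finset.univ.filter fun v => f v = a * m).card with hs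
  have hsk : s ≤ k := by
    calc s ≤ Finset.univ.card := Finset.card_filter_le _ _
    _ = k := by simp
  have hcompl : (Finset.univ.filter fun v => ¬ f v = a * m).card = k - s := by
    have := Finset.card_filter_add_card_filter_not
      (s := (Finset.univ : Finset (Fin k))) (p := fun v => f v = a * m)
    simp only [Finset.card_univ, Fintype.card_fin] at this
    omega
  constructor
  · rw [← Finset.sum_filter_add_sum_filter_not Finset.univ (fun v => f v = a * m)]
    rw [Finset.sum_congr rfl (fun v hv => (Finset.mem_filter.1 hv).2),
      Finset.sum_congr rfl (fun v hv => (hf v).resolve_right (Finset.mem_filter.1 hv).2),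
      Finset.sum_const, Finset.sum_const, hcompl, ← hs, nsmul_eq_mul, nsmul_eq_mul]
    push_cast [Nat.cast_sub hsk]
    ring
  · rw [← Finset.sum_filter_add_sum_filter_not Finset.univ (fun v => f v = a * m)]
    rw [Finset.sum_congr rfl
        (fun v hv => by rw [(Finset.mem_filter.1 hv).2] : ∀ v ∈ _, (f v)^2 = (a*m)^2),
      Finset.sum_congr rfl
        (fun v hv => by
          rw [(hf v).resolve_right (Finset.mem_filter.1 hv).2] :
          ∀ v ∈ Finset.univ.filter fun v => ¬ f v = a * m, (f v)^2 = m^2),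
      Finset.sum_const, Finset.sum_const, hcompl, ← hs, nsmul_eq_mul, nsmul_eq_mul]
    push_cast [Nat.cast_sub hsk]
    ring

/-- Core algebraic per-row bound. -/
lemma rowBound (k : ℕ) (hk : 2 ≤ k) (a G : ℝ) (ha : 1 < a) (hG : 0 < G)
    (hGle : ∀ s : ℕ, 1 ≤ s → s ≤ k - 1 →
      (s : ℝ) * ((k : ℝ) - s) * G ≤ ((s : ℝ) * a + (k : ℝ) - s)^2)
    (s : ℕ) (hs : s ≤ k) (m : ℝ) (hm : 0 < m) :
    (k : ℝ) * (m^2 * ((a^2 - 1) * s + k)) / (m * ((a - 1) * s + k)) ≤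
      (1 + (a - 1)^2 / G) * (m * ((a - 1) * s + k)) := by
  have hk2 : (2 : ℝ) ≤ (k : ℝ) := by exact_mod_cast hk
  have hsr : (0 : ℝ) ≤ (s : ℝ) := Nat.cast_nonneg s
  have hT : 0 < m * ((a - 1) * s + k) := by
    apply mul_pos hm; nlinarith
  have h2 : (s : ℝ) * ((k : ℝ) - s) * G ≤ ((a - 1) * s + (k : ℝ))^2 := by
    rcases Nat.eq_zero_or_pos s with h0 | h1
    · subst h0
      simp only [Nat.cast_zero, zero_mul, mul_zero]
      nlinarith [sq_nonneg ((a - 1) * (0:ℝ) + (k:ℝ))]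
    · rcases eq_or_lt_of_le hs with hek | hlt
      · have hks : (k : ℝ) - s = 0 := by rw [hek]; ring
        rw [hks, mul_zero, zero_mul]
        positivity
      · have := hGle s h1 (by omega)
        have hcast : ((s : ℝ) * a + (k : ℝ) - s) = (a - 1) * s + k := by ring
        rw [hcast] at this
        exact this
  rw [div_le_iff₀ hT]
  have hGne : G ≠ 0 := hG.ne'
  have hD2 : (s : ℝ) * ((k : ℝ) - s) ≤ ((a - 1) * s + (k:ℝ))^2 / G :=
    (le_div_iff₀ hG).2 h2
  have expand : (1 + (a - 1)^2 / G) * (m * ((a - 1) * s + k)) * (m * ((a - 1) * s + k))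
      = (m * ((a - 1) * s + k))^2 + (a - 1)^2 * m^2 * (((a - 1) * s + (k:ℝ))^2 / G) := by
    field_simp
  rw [expand]
  nlinarith [mul_le_mul_of_nonneg_left hD2 (by positivity : (0:ℝ) ≤ (a - 1)^2 * m^2)]

theorem final_step (k : ℕ) (hk : 1 ≤ k) (c M : ℝ) (hc : 0 < c) (hM : 0 < M)
    (V : Fin k → ℝ) (hV : ∑ i, V i ≤ (k : ℝ) / M) :
    ENNReal.ofReal ((k : ℝ) * M ^ c) ≤ ∑ i, (ENNReal.ofReal (V i)) ^ (-c) := by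
  by_cases hp : ∀ i, 0 < V i
  · have hk0 : (0 : ℝ) < k := by exact_mod_cast hk
    set S := ∑ i, V i with hSdef
    have hS : 0 < S := Finset.sum_pos (fun i _ => hp i) ⟨⟨0, by omega⟩, Finset.mem_univ _⟩
    set R := ∑ i, (V i) ^ (-c) with hRdef
    have hR : 0 ≤ R := Finset.sum_nonneg fun i _ => Real.rpow_nonneg (hp i).le _
    -- Hölder
    have hH := Real.inner_le_weight_mul_Lp_of_nonneg (Finset.univ (α := Fin k))
      (p := 1 + c) (by linarith) V (fun i => (V i)⁻¹)
      (fun i => (hp i).le) (fun i => inv_nonneg.2 (hp i).le)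
    have e1 : ∑ i, V i * (V i)⁻¹ = (k : ℝ) := by
      rw [Finset.sum_congr rfl fun i _ => mul_inv_cancel₀ (hp i).ne']
      simp
    have e2 : ∑ i : Fin k, V i * ((V i)⁻¹) ^ (1 + c) = R := by
      refine Finset.sum_congr rfl fun i _ => ?_
      rw [Real.inv_rpow (hp i).le, ← Real.rpow_neg (hp i).le]
      rw [show V i * (V i) ^ (-(1+c)) = (V i) ^ (1:ℝ) * (V i) ^ (-(1+c)) by
        rw [Real.rpow_one], ← Real.rpow_add (hp i)]
      norm_num
    rw [e1, e2] at hH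
    have hpow := Real.rpow_le_rpow (by positivity) hH (by positivity : (0:ℝ) ≤ 1 + c)
    rw [Real.mul_rpow (Real.rpow_nonneg hS.le _) (Real.rpow_nonneg hR _),
      ← Real.rpow_mul hS.le, ← Real.rpow_mul hR] at hpow
    have hc1 : (1 - (1 + c)⁻¹) * (1 + c) = c := by field_simp; ring
    have hc2 : (1 + c)⁻¹ * (1 + c) = 1 := inv_mul_cancel₀ (by positivity)
    rw [hc1, hc2, Real.rpow_one] at hpow
    have hMS : M ≤ (k : ℝ) / S := by
      rw [le_div_iff₀ hS]
      have h' : S * M ≤ (k : ℝ) := (le_div_iff₀ hM).1 hV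
      nlinarith [h']
    have hfin : (k : ℝ) * M ^ c ≤ R := by
      have hb : M ^ c ≤ ((k : ℝ) / S) ^ c := Real.rpow_le_rpow hM.le hMS hc.le
      have h1 : (k : ℝ) * M ^ c ≤ (k : ℝ) * ((k : ℝ) / S) ^ c :=
        mul_le_mul_of_nonneg_left hb hk0.le
      have h2 : (k : ℝ) * ((k : ℝ) / S) ^ c = (k : ℝ) ^ ((1:ℝ) + c) / S ^ c := by
        rw [Real.div_rpow hk0.le hS.le, Real.rpow_add hk0, Real.rpow_one]
        ring
      have h3 : (k : ℝ) ^ ((1:ℝ) + c) / S ^ c ≤ R := by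
        rw [div_le_iff₀ (by positivity : (0:ℝ) < S ^ c)]
        nlinarith [hpow]
      linarith
    calc ENNReal.ofReal ((k : ℝ) * M ^ c) ≤ ENNReal.ofReal R :=
          ENNReal.ofReal_le_ofReal hfin
    _ = ∑ i, (ENNReal.ofReal (V i)) ^ (-c) := by
        rw [hRdef, ENNReal.ofReal_sum_of_nonneg (fun i _ => Real.rpow_nonneg (hp i).le _)]
        exact Finset.sum_congr rfl fun i _ => (ENNReal.ofReal_rpow_of_pos (hp i)).symm
  · push_neg at hp
    obtain ⟨i, hi⟩ := hp
    have hterm : (ENNReal.ofReal (V i)) ^ (-c) = ⊤ := by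
      rw [ENNReal.ofReal_eq_zero.2 hi, ENNReal.zero_rpow_of_neg (by linarith)]
    have : (⊤ : ℝ≥0∞) ≤ ∑ i, (ENNReal.ofReal (V i)) ^ (-c) :=
      hterm ▸ Finset.single_le_sum (f := fun i => (ENNReal.ofReal (V i)) ^ (-c))
        (fun _ _ => zero_le) (Finset.mem_univ i)
    exact le_trans le_top this

set_option maxHeartbeats 1000000 in
theorem statement16 (k L : ℕ) (hk : 2 ≤ k) (ε u : ℝ) (hε : 0 < ε) (hu : 0 < u)
    (q : Fin L → Fin k → ℝ) (hq : memDEE k L ε q)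
    (dstar : ℕ) (hd : IsOptDstar k ε dstar) :
    ENNReal.ofReal ((k:ℝ) * Mconst k ε dstar ^ (u/2)) ≤
      ∑ i, (ENNReal.ofReal
          ((k:ℝ)^2 / ((k:ℝ)-1)^2 * (∑ j, (q j i)^2 / qrow q j - 1))) ^ (-(u/2)) := by
  classical
  have ha : 1 < Real.exp ε := Real.one_lt_exp_iff.2 hε
  set a := Real.exp ε with hadef
  have hk2 : (2:ℝ) ≤ (k:ℝ) := by exact_mod_cast hk
  have hk0 : (0:ℝ) < (k:ℝ) := by linarith
  have hdmem := hd.1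
  rw [Finset.mem_Icc] at hdmem
  have hdr1 : (1:ℝ) ≤ (dstar:ℝ) := by exact_mod_cast hdmem.1
  have hdrk : (dstar:ℝ) ≤ (k:ℝ) - 1 := by
    have h1 : (dstar:ℝ) ≤ ((k-1:ℕ):ℝ) := by exact_mod_cast hdmem.2
    rw [Nat.cast_sub (by omega), Nat.cast_one] at h1
    exact h1
  set G := gfun ε k dstar with hGdef
  have hG : 0 < G := by
    rw [hGdef]
    unfold gfun
    rw [← hadef]
    have hnum : 0 < (dstar:ℝ) * a + (k:ℝ) - dstar := by nlinarith
    exact div_pos (pow_pos hnum 2) (by nlinarith)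
  have hGle : ∀ s : ℕ, 1 ≤ s → s ≤ k - 1 →
      (s:ℝ) * ((k:ℝ) - s) * G ≤ ((s:ℝ) * a + (k:ℝ) - s)^2 := by
    intro s h1 h2
    have hle := hd.2 s (Finset.mem_Icc.2 ⟨h1, h2⟩)
    have hsr1 : (1:ℝ) ≤ (s:ℝ) := by exact_mod_cast h1
    have hsrk : (s:ℝ) ≤ (k:ℝ) - 1 := by
      have h3 : (s:ℝ) ≤ ((k-1:ℕ):ℝ) := by exact_mod_cast h2
      rw [Nat.cast_sub (by omega), Nat.cast_one] at h3
      exact h3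
    have hden : 0 < (s:ℝ) * ((k:ℝ) - s) := by nlinarith
    rw [← hGdef] at hle
    unfold gfun at hle
    rw [← hadef] at hle
    rw [le_div_iff₀ hden] at hle
    nlinarith [hle]
  -- per-row bound
  have hrow : ∀ j, ∑ i, (q j i)^2 / qrow q j ≤ (1 + (a-1)^2/G) * ∑ v, q j v := by
    intro j
    obtain ⟨m, hm, hcases⟩ := rowStruct hk hε hq j
    rw [← hadef] at hcases
    obtain ⟨hT, hS2⟩ := rowSums a m ha hm (q j) hcases
    set s := (Finset.univ.filter fun v => q j v = a * m).card with hsdef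
    have hsk : s ≤ k := le_trans (Finset.card_filter_le _ _) (by simp)
    have hsr : (0:ℝ) ≤ (s:ℝ) := Nat.cast_nonneg s
    have hqrow : qrow q j = m * ((a-1) * s + k) / k := by
      rw [qrow, hT]; ring
    rw [← Finset.sum_div, hS2, hT, hqrow, div_div_eq_mul_div]
    calc m^2 * ((a^2-1) * s + k) * k / (m * ((a-1) * s + k))
        = (k:ℝ) * (m^2 * ((a^2-1) * s + k)) / (m * ((a-1) * s + k)) := by ring
    _ ≤ _ := rowBound k hk a G ha hG hGle s hsk m hm
  have hsumT : ∑ j, ∑ v, q j v = (k:ℝ) := by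
    rw [Finset.sum_comm]
    simp [hq.2.1]
  have htotal : ∑ i, ∑ j, (q j i)^2 / qrow q j ≤ (1 + (a-1)^2/G) * k := by
    rw [Finset.sum_comm]
    calc ∑ j, ∑ i, (q j i)^2 / qrow q j
        ≤ ∑ j, (1 + (a-1)^2/G) * ∑ v, q j v := Finset.sum_le_sum fun j _ => hrow j
    _ = (1 + (a-1)^2/G) * ∑ j, ∑ v, q j v := by rw [← Finset.mul_sum]
    _ = _ := by rw [hsumT]
  have hM : 0 < Mconst k ε dstar := by
    unfold Mconst
    rw [← hadef, ← hGdef]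
    apply mul_pos
    · exact div_pos (pow_pos (by linarith : (0:ℝ) < (k:ℝ) - 1) 2)
        (mul_pos (pow_pos hk0 2) (pow_pos (by linarith : (0:ℝ) < a - 1) 2))
    · exact hG
  have hVsum : ∑ i, (k:ℝ)^2 / ((k:ℝ)-1)^2 * (∑ j, (q j i)^2 / qrow q j - 1)
      ≤ (k:ℝ) / Mconst k ε dstar := by
    have e : ∑ i, (k:ℝ)^2 / ((k:ℝ)-1)^2 * (∑ j, (q j i)^2 / qrow q j - 1)
        = (k:ℝ)^2 / ((k:ℝ)-1)^2 * (∑ i, ∑ j, (q j i)^2 / qrow q j - k) := by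
      rw [← Finset.mul_sum, Finset.sum_sub_distrib]
      simp
    rw [e]
    have hb : ∑ i, ∑ j, (q j i)^2 / qrow q j - (k:ℝ) ≤ (a-1)^2/G * k := by
      nlinarith [htotal]
    calc (k:ℝ)^2 / ((k:ℝ)-1)^2 * (∑ i, ∑ j, (q j i)^2 / qrow q j - k)
        ≤ (k:ℝ)^2 / ((k:ℝ)-1)^2 * ((a-1)^2/G * k) :=
          mul_le_mul_of_nonneg_left hb (by positivity)
    _ = (k:ℝ) / Mconst k ε dstar := by
      unfold Mconst
      rw [← hadef, ← hGdef]
      have h1 : ((k:ℝ)-1) ≠ 0 := by nlinarith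
      have h2 : G ≠ 0 := hG.ne'
      have h3 : (a-1) ≠ 0 := by nlinarith
      have h4 : (k:ℝ) ≠ 0 := hk0.ne'
      field_simp
  exact final_step k (by omega) (u/2) (Mconst k ε dstar) (by linarith) hM _ hVsum
end
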